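/- arXiv:2209.04771 — 5 statements merged into one kernel-verified Lean document; each statement's English description precedes it below -/
import Mathlib

section
/- Let α ∈ (0,1/2], let f̂ be a nonnegative measure on ℝ^d with Υ(0) := (2π)^{−d} ∫ |ξ|^{−2} f̂(dξ) < ∞, and suppose H_α(t) < ∞ for all t > 0. Then Υ_{2α}(0) < ∞; more precisely, Υ_{2α}(0) ≤ H_α(t)/((2π)^d Γ(1−2α)) + Υ(0)/(Γ(1−2α) t^{2α}) for every t > 0. -/
open Real MeasureTheory ENNReal

open Set

lemma aux_gamma {a c : ℝ} (ha : 0 < a) (hc : 0 < c) :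
    ∫⁻ r in Set.Ioi (0:ℝ), ENNReal.ofReal (r ^ (a-1) * Real.exp (-(c*r)))
      = ENNReal.ofReal ((1/c) ^ a * Real.Gamma a) := by
  have hint0 : IntegrableOn (fun r : ℝ => Real.exp (-(c*r)) * (c*r) ^ (a-1)) (Set.Ioi 0) := by
    have := (integrableOn_Ioi_comp_mul_left_iff
      (fun x : ℝ => Real.exp (-x) * x ^ (a-1)) 0 hc).mpr
      (by simpa using Real.GammaIntegral_convergent ha)
    simpa using this
  have hint : IntegrableOn (fun r : ℝ => r ^ (a-1) * Real.exp (-(c*r))) (Set.Ioi 0) := by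
    have h := hint0.const_mul (c ^ (1-a))
    apply IntegrableOn.congr_fun h ?_ measurableSet_Ioi
    intro r hr
    simp only [Set.mem_Ioi] at hr
    simp only []
    rw [Real.mul_rpow hc.le hr.le]
    rw [show c ^ (1-a) * (Real.exp (-(c*r)) * (c ^ (a-1) * r ^ (a-1)))
        = (c ^ (1-a) * c ^ (a-1)) * (r ^ (a-1) * Real.exp (-(c*r))) by ring,
      ← Real.rpow_add hc]
    norm_num
  rw [← MeasureTheory.ofReal_integral_eq_lintegral_ofReal hint ?nn,
    Real.integral_rpow_mul_exp_neg_mul_Ioi ha hc]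
  case nn =>
    filter_upwards [ae_restrict_mem measurableSet_Ioi] with r hr
    have : (0:ℝ) < r := hr
    positivity

lemma aux_pt {α t x : ℝ} (hα0 : 0 < α) (hα1 : α < 1/2) (ht : 0 < t) (hx : 0 ≤ x) :
    ENNReal.ofReal (Real.Gamma (1-2*α)) * ENNReal.ofReal (x ^ (-(2*(1-2*α))))
      ≤ (∫⁻ r in Set.Ioc (0:ℝ) t, ENNReal.ofReal (r ^ (-(2*α)) * Real.exp (-(x^2*r))))
        + ENNReal.ofReal (t ^ (-(2*α))) * ENNReal.ofReal (x ^ (-(2:ℝ))) := by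
  rcases hx.eq_or_lt with h0 | hx
  · rw [← h0, Real.zero_rpow (by intro h; nlinarith : -(2*(1-2*α)) ≠ 0)]
    simp
  have ha : 0 < 1-2*α := by linarith
  have hc : 0 < x^2 := by positivity
  -- the full-line identity
  have hx2 : ((1:ℝ)/x^2) ^ (1-2*α) = x ^ (-(2*(1-2*α))) := by
    have h2 : ((1:ℝ)/x^2) = x ^ (-2:ℝ) := by
      rw [Real.rpow_neg hx.le, one_div, show (2:ℝ) = ((2:ℕ):ℝ) by norm_num,
        Real.rpow_natCast]
    rw [h2, ← Real.rpow_mul hx.le, show (-2)*(1-2*α) = -(2*(1-2*α)) by ring]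
  have hid : ENNReal.ofReal (Real.Gamma (1-2*α)) * ENNReal.ofReal (x ^ (-(2*(1-2*α))))
      = ∫⁻ r in Set.Ioi (0:ℝ), ENNReal.ofReal (r ^ (-(2*α)) * Real.exp (-(x^2*r))) := by
    rw [← ENNReal.ofReal_mul (Real.Gamma_nonneg_of_nonneg ha.le), ← hx2, mul_comm,
      ← aux_gamma ha hc]
    congr 1
    ext r
    norm_num
  rw [hid, ← Set.Ioc_union_Ioi_eq_Ioi ht.le,
    lintegral_union measurableSet_Ioi (by exact Set.Ioc_disjoint_Ioi le_rfl)]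
  gcongr
  -- tail bound
  have step1 : (∫⁻ r in Set.Ioi t, ENNReal.ofReal (r ^ (-(2*α)) * Real.exp (-(x^2*r))))
      ≤ ∫⁻ r in Set.Ioi t, ENNReal.ofReal (t ^ (-(2*α))) * ENNReal.ofReal (Real.exp (-(x^2*r))) := by
    apply setLIntegral_mono (by fun_prop) ?_
    intro r hr
    rw [← ENNReal.ofReal_mul (by positivity)]
    apply ENNReal.ofReal_le_ofReal
    exact mul_le_mul_of_nonneg_right
      (Real.rpow_le_rpow_of_nonpos ht (le_of_lt hr) (by linarith)) (Real.exp_nonneg _)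
  refine step1.trans ?_
  rw [lintegral_const_mul _ (by fun_prop)]
  gcongr
  calc ∫⁻ r in Set.Ioi t, ENNReal.ofReal (Real.exp (-(x^2*r)))
      ≤ ∫⁻ r in Set.Ioi 0, ENNReal.ofReal (Real.exp (-(x^2*r))) :=
        lintegral_mono_set (Set.Ioi_subset_Ioi ht.le)
    _ = ENNReal.ofReal (x ^ (-(2:ℝ))) := by
        have := aux_gamma (a := 1) (c := x^2) one_pos hc
        simp only [sub_self, Real.rpow_zero, one_mul, Real.rpow_one, Real.Gamma_one,
          mul_one] at this
        rw [this]
        congr 1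
        rw [Real.rpow_neg hx.le, one_div, show (2:ℝ) = ((2:ℕ):ℝ) by norm_num,
          Real.rpow_natCast]

lemma aux_main {d : ℕ} {α t : ℝ} (hα0 : 0 < α) (hα1 : α < 1/2) (ht : 0 < t)
    (μ : Measure (EuclideanSpace ℝ (Fin d))) [SigmaFinite μ] :
    ENNReal.ofReal (Real.Gamma (1-2*α)) * ∫⁻ ξ, ENNReal.ofReal (‖ξ‖ ^ (-(2*(1-2*α)))) ∂μ
      ≤ (∫⁻ r in Set.Ioc (0:ℝ) t,
            ENNReal.ofReal (r ^ (-(2*α))) * ∫⁻ ξ, ENNReal.ofReal (Real.exp (-(r * ‖ξ‖^2))) ∂μ)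
        + ENNReal.ofReal (t ^ (-(2*α))) * ∫⁻ ξ, ENNReal.ofReal (‖ξ‖ ^ (-(2:ℝ))) ∂μ := by
  have hmeas : Measurable (fun p : ℝ × EuclideanSpace ℝ (Fin d) =>
      ENNReal.ofReal (p.1 ^ (-(2*α)) * Real.exp (-(p.1 * ‖p.2‖^2)))) := by
    fun_prop
  calc ENNReal.ofReal (Real.Gamma (1-2*α)) * ∫⁻ ξ, ENNReal.ofReal (‖ξ‖ ^ (-(2*(1-2*α)))) ∂μ
      = ∫⁻ ξ, ENNReal.ofReal (Real.Gamma (1-2*α)) * ENNReal.ofReal (‖ξ‖ ^ (-(2*(1-2*α)))) ∂μ := by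
        rw [lintegral_const_mul _ (by fun_prop)]
    _ ≤ ∫⁻ ξ, ((∫⁻ r in Set.Ioc (0:ℝ) t, ENNReal.ofReal (r ^ (-(2*α)) * Real.exp (-(‖ξ‖^2*r))))
          + ENNReal.ofReal (t ^ (-(2*α))) * ENNReal.ofReal (‖ξ‖ ^ (-(2:ℝ)))) ∂μ :=
        lintegral_mono fun ξ => aux_pt hα0 hα1 ht (norm_nonneg ξ)
    _ = (∫⁻ ξ, (∫⁻ r in Set.Ioc (0:ℝ) t,
            ENNReal.ofReal (r ^ (-(2*α)) * Real.exp (-(‖ξ‖^2*r)))) ∂μ)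
          + ENNReal.ofReal (t ^ (-(2*α))) * ∫⁻ ξ, ENNReal.ofReal (‖ξ‖ ^ (-(2:ℝ))) ∂μ := by
        rw [lintegral_add_right _ (by fun_prop), lintegral_const_mul _ (by fun_prop)]
    _ ≤ (∫⁻ r in Set.Ioc (0:ℝ) t,
            ENNReal.ofReal (r ^ (-(2*α))) * ∫⁻ ξ, ENNReal.ofReal (Real.exp (-(r * ‖ξ‖^2))) ∂μ)
        + ENNReal.ofReal (t ^ (-(2*α))) * ∫⁻ ξ, ENNReal.ofReal (‖ξ‖ ^ (-(2:ℝ))) ∂μ := by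
        gcongr
        rw [lintegral_lintegral_swap]
        · apply le_of_eq
          apply setLIntegral_congr_fun measurableSet_Ioc
          intro r hr
          beta_reduce
          rw [← lintegral_const_mul _ (by fun_prop)]
          congr 1 with ξ
          rw [← ENNReal.ofReal_mul (Real.rpow_nonneg (le_of_lt hr.1) _)]
          congr 2
          ring_nf
        · apply Measurable.aemeasurable
          unfold Function.uncurry
          fun_prop

lemma aux_sf {d : ℕ} {α : ℝ} (hα0 : 0 < α)
    (μ : Measure (EuclideanSpace ℝ (Fin d)))
    (hH : (∫⁻ r in Set.Ioc (0:ℝ) 1,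
        ENNReal.ofReal (r ^ (-(2*α))) * ∫⁻ ξ, ENNReal.ofReal (Real.exp (-(r * ‖ξ‖^2))) ∂μ) < ⊤) :
    SigmaFinite μ := by
  set inner : ℝ → ℝ≥0∞ := fun r => ∫⁻ ξ, ENNReal.ofReal (Real.exp (-(r * ‖ξ‖^2))) ∂μ with hinner
  have hanti : Antitone inner := by
    intro r s hrs
    apply lintegral_mono fun ξ => ?_
    apply ENNReal.ofReal_le_ofReal
    apply Real.exp_le_exp.mpr
    have : (0:ℝ) ≤ ‖ξ‖^2 := by positivity
    nlinarith
  have hfm : Measurable (fun r : ℝ => ENNReal.ofReal (r ^ (-(2*α))) * inner r) :=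
    (by fun_prop : Measurable fun r : ℝ => ENNReal.ofReal (r ^ (-(2*α)))).mul hanti.measurable
  have hne : Filter.NeBot (ae (volume.restrict (Set.Ioc (0:ℝ) 1))) := by
    rw [ae_neBot, Ne, Measure.restrict_eq_zero]
    simp
  obtain ⟨r₀, h1, h2⟩ :=
    ((ae_lt_top hfm hH.ne).and (ae_restrict_mem measurableSet_Ioc)).exists
  have hr₀ : 0 < r₀ := h2.1
  have hinner_lt : inner r₀ < ⊤ := by
    by_contra h
    rw [not_lt, top_le_iff] at h
    rw [h, ENNReal.mul_top (by simp [Real.rpow_pos_of_pos hr₀, ENNReal.ofReal_pos.mpr])] at h1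
    · exact absurd h1 (lt_irrefl _)
  have hball : ∀ n : ℕ, μ {ξ : EuclideanSpace ℝ (Fin d) | ‖ξ‖ ≤ (n:ℝ)} < ⊤ := by
    intro n
    have hms : MeasurableSet {ξ : EuclideanSpace ℝ (Fin d) | ‖ξ‖ ≤ (n:ℝ)} :=
      measurableSet_le measurable_norm measurable_const
    have : μ {ξ : EuclideanSpace ℝ (Fin d) | ‖ξ‖ ≤ (n:ℝ)}
        ≤ ENNReal.ofReal (Real.exp (r₀ * (n:ℝ)^2)) * inner r₀ := by
      calc μ {ξ : EuclideanSpace ℝ (Fin d) | ‖ξ‖ ≤ (n:ℝ)}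
          = ∫⁻ ξ in {ξ : EuclideanSpace ℝ (Fin d) | ‖ξ‖ ≤ (n:ℝ)}, 1 ∂μ := by
            rw [setLIntegral_one]
        _ ≤ ∫⁻ ξ in {ξ : EuclideanSpace ℝ (Fin d) | ‖ξ‖ ≤ (n:ℝ)},
              ENNReal.ofReal (Real.exp (r₀ * (n:ℝ)^2))
                * ENNReal.ofReal (Real.exp (-(r₀ * ‖ξ‖^2))) ∂μ := by
            apply setLIntegral_mono (by fun_prop)
            intro ξ hξ
            rw [← ENNReal.ofReal_mul (Real.exp_nonneg _), ← Real.exp_add]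
            apply ENNReal.one_le_ofReal.mpr
            apply Real.one_le_exp
            have h1 : ‖ξ‖ ≤ (n:ℝ) := hξ
            have h0 : (0:ℝ) ≤ ‖ξ‖ := norm_nonneg _
            nlinarith [mul_le_mul_of_nonneg_left (pow_le_pow_left₀ h0 h1 2) hr₀.le]
        _ ≤ ENNReal.ofReal (Real.exp (r₀ * (n:ℝ)^2)) * inner r₀ := by
            rw [lintegral_const_mul _ (by fun_prop)]
            exact mul_le_mul_right (setLIntegral_le_lintegral _ _) _
    exact this.trans_lt (ENNReal.mul_lt_top ENNReal.ofReal_lt_top hinner_lt)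
  refine ⟨⟨⟨fun n => {ξ : EuclideanSpace ℝ (Fin d) | ‖ξ‖ ≤ (n:ℝ)},
    fun _ => trivial, hball, ?_⟩⟩⟩
  apply Set.eq_univ_iff_forall.mpr
  intro ξ
  obtain ⟨n, hn⟩ := exists_nat_ge ‖ξ‖
  exact Set.mem_iUnion.mpr ⟨n, hn⟩

theorem reverse_implication_H_Upsilon (d : ℕ) (α : ℝ) (hα : α ∈ Set.Ioc (0:ℝ) (1/2))
    (μ : Measure (EuclideanSpace ℝ (Fin d)))
    (hΥ0 : ENNReal.ofReal ((2*Real.pi) ^ (-(d:ℝ))) *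
        ∫⁻ ξ, ENNReal.ofReal (‖ξ‖ ^ (-(2:ℝ))) ∂μ < ⊤)
    (hH : ∀ t : ℝ, 0 < t →
        (∫⁻ r in Set.Ioc (0:ℝ) t,
            ENNReal.ofReal (r ^ (-(2*α))) * ∫⁻ ξ, ENNReal.ofReal (Real.exp (-(r * ‖ξ‖^2))) ∂μ) < ⊤) :
    ENNReal.ofReal ((2*Real.pi) ^ (-(d:ℝ))) *
        ∫⁻ ξ, ENNReal.ofReal (‖ξ‖ ^ (-(2*(1 - 2*α)))) ∂μ < ⊤
    ∧ ∀ t : ℝ, 0 < t →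
        ENNReal.ofReal ((2*Real.pi) ^ (-(d:ℝ))) *
            ∫⁻ ξ, ENNReal.ofReal (‖ξ‖ ^ (-(2*(1 - 2*α)))) ∂μ
          ≤ (∫⁻ r in Set.Ioc (0:ℝ) t,
                ENNReal.ofReal (r ^ (-(2*α))) * ∫⁻ ξ, ENNReal.ofReal (Real.exp (-(r * ‖ξ‖^2))) ∂μ) /
              ENNReal.ofReal ((2*Real.pi) ^ (d:ℝ) * Real.Gamma (1 - 2*α))
            + (ENNReal.ofReal ((2*Real.pi) ^ (-(d:ℝ))) *
                  ∫⁻ ξ, ENNReal.ofReal (‖ξ‖ ^ (-(2:ℝ))) ∂μ) /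
                ENNReal.ofReal (Real.Gamma (1 - 2*α) * t ^ (2*α)) := by
  obtain ⟨hα0, hα2⟩ := hα
  rcases eq_or_lt_of_le hα2 with heq | h2
  · -- case α = 1/2 : μ must be zero
    have hμ : μ = 0 := by
      by_contra hμ
      have hinf : ∫⁻ r in Set.Ioc (0:ℝ) 1, ENNReal.ofReal (r ^ (-(2*α))) = ⊤ := by
        by_contra h
        have hi : IntegrableOn (fun r : ℝ => r ^ (-(2*α))) (Set.Ioc 0 1) := by
          apply (lintegral_ofReal_ne_top_iff_integrable ?_ ?_).mp h
          · fun_prop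
          · filter_upwards [ae_restrict_mem measurableSet_Ioc] with r hr
            exact Real.rpow_nonneg hr.1.le _
        have := (intervalIntegral.integrableOn_Ioo_rpow_iff (s := -(2*α)) zero_lt_one).mp
          (hi.mono_set Set.Ioo_subset_Ioc_self)
        rw [heq] at this
        norm_num at this
      set inner : ℝ → ℝ≥0∞ :=
        fun r => ∫⁻ ξ, ENNReal.ofReal (Real.exp (-(r * ‖ξ‖^2))) ∂μ with hinner
      have hanti : Antitone inner := by
        intro r s hrs
        apply lintegral_mono fun ξ => ?_
        apply ENNReal.ofReal_le_ofReal
        apply Real.exp_le_exp.mpr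
        have : (0:ℝ) ≤ ‖ξ‖^2 := by positivity
        nlinarith
      have hpos : inner 1 ≠ 0 := by
        intro h
        rw [hinner, lintegral_eq_zero_iff (by fun_prop)] at h
        have : ∀ᵐ ξ ∂μ, False := by
          filter_upwards [h] with ξ hξ
          simp only [Pi.zero_apply, ENNReal.ofReal_eq_zero] at hξ
          exact absurd hξ (Real.exp_pos _).not_ge
        have h0 : μ Set.univ = 0 := by simpa [ae_iff] using this
        exact hμ (Measure.measure_univ_eq_zero.mp h0)
      have hlow : (∫⁻ r in Set.Ioc (0:ℝ) 1, ENNReal.ofReal (r ^ (-(2*α))) * inner 1)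
          ≤ ∫⁻ r in Set.Ioc (0:ℝ) 1, ENNReal.ofReal (r ^ (-(2*α))) * inner r := by
        apply setLIntegral_mono
          ((by fun_prop : Measurable fun r : ℝ => ENNReal.ofReal (r ^ (-(2*α)))).mul
            hanti.measurable)
        intro r hr
        exact mul_le_mul_right (hanti hr.2) _
      rw [lintegral_mul_const _ (by fun_prop), hinf,
        ENNReal.top_mul hpos] at hlow
      exact absurd (top_le_iff.mp hlow ▸ hH 1 one_pos) (by simp)
    subst hμ
    simp [lintegral_zero_measure]
  · -- case α < 1/2
    have : SigmaFinite μ := aux_sf hα0 μ (hH 1 one_pos)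
    have hG0 : 0 < Real.Gamma (1 - 2*α) := Real.Gamma_pos_of_pos (by linarith)
    set G := ENNReal.ofReal (Real.Gamma (1 - 2*α)) with hG
    have hGne : G ≠ 0 := (ENNReal.ofReal_pos.mpr hG0).ne'
    have hGtop : G ≠ ⊤ := ENNReal.ofReal_ne_top
    have h2π : (0:ℝ) < 2*Real.pi := by positivity
    set C := ENNReal.ofReal ((2*Real.pi) ^ (-(d:ℝ))) with hC
    have hCne : C ≠ 0 := (ENNReal.ofReal_pos.mpr (Real.rpow_pos_of_pos h2π _)).ne'
    set A := ∫⁻ ξ, ENNReal.ofReal (‖ξ‖ ^ (-(2*(1 - 2*α)))) ∂μ with hA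
    set B := ∫⁻ ξ, ENNReal.ofReal (‖ξ‖ ^ (-(2:ℝ))) ∂μ with hB
    have hBtop : B ≠ ⊤ := by
      intro h
      rw [h, ENNReal.mul_top hCne] at hΥ0
      exact absurd hΥ0 (by simp)
    have key : ∀ t : ℝ, 0 < t → G * A ≤
        (∫⁻ r in Set.Ioc (0:ℝ) t,
            ENNReal.ofReal (r ^ (-(2*α))) * ∫⁻ ξ, ENNReal.ofReal (Real.exp (-(r * ‖ξ‖^2))) ∂μ)
          + ENNReal.ofReal (t ^ (-(2*α))) * B :=
      fun t ht => aux_main hα0 h2 ht μ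
    have hAtop : A ≠ ⊤ := by
      intro h
      have h1 := key 1 one_pos
      rw [h, ENNReal.mul_top hGne, top_le_iff] at h1
      have : ((∫⁻ r in Set.Ioc (0:ℝ) 1,
          ENNReal.ofReal (r ^ (-(2*α))) * ∫⁻ ξ, ENNReal.ofReal (Real.exp (-(r * ‖ξ‖^2))) ∂μ)
            + ENNReal.ofReal ((1:ℝ) ^ (-(2*α))) * B) < ⊤ :=
        ENNReal.add_lt_top.mpr ⟨hH 1 one_pos, ENNReal.mul_lt_top ENNReal.ofReal_lt_top
          (lt_top_iff_ne_top.mpr hBtop)⟩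
      rw [h1] at this
      exact absurd this (by simp)
    constructor
    · exact ENNReal.mul_lt_top ENNReal.ofReal_lt_top (lt_top_iff_ne_top.mpr hAtop)
    · intro t ht
      set Ht := ∫⁻ r in Set.Ioc (0:ℝ) t,
          ENNReal.ofReal (r ^ (-(2*α))) * ∫⁻ ξ, ENNReal.ofReal (Real.exp (-(r * ‖ξ‖^2))) ∂μ
        with hHt
      set P := ENNReal.ofReal ((2*Real.pi) ^ (d:ℝ)) with hP
      have hPne : P ≠ 0 := (ENNReal.ofReal_pos.mpr (Real.rpow_pos_of_pos h2π _)).ne'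
      have hPtop : P ≠ ⊤ := ENNReal.ofReal_ne_top
      set T := ENNReal.ofReal (t ^ (2*α)) with hT
      have hCP : C = P⁻¹ := by
        rw [hC, hP, ← ENNReal.ofReal_inv_of_pos (Real.rpow_pos_of_pos h2π _),
          ← Real.rpow_neg h2π.le]
      have hTinv : ENNReal.ofReal (t ^ (-(2*α))) = T⁻¹ := by
        rw [hT, ← ENNReal.ofReal_inv_of_pos (Real.rpow_pos_of_pos ht _),
          ← Real.rpow_neg ht.le]
      have key' : G * A ≤ Ht + T⁻¹ * B := by rw [← hTinv]; exact key t ht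
      calc C * A = C * (G⁻¹ * (G * A)) := by
            rw [← mul_assoc G⁻¹, ENNReal.inv_mul_cancel hGne hGtop, one_mul]
        _ ≤ C * (G⁻¹ * (Ht + T⁻¹ * B)) := by gcongr
        _ = Ht / ENNReal.ofReal ((2*Real.pi) ^ (d:ℝ) * Real.Gamma (1 - 2*α))
              + (C * B) / ENNReal.ofReal (Real.Gamma (1 - 2*α) * t ^ (2*α)) := by
            rw [ENNReal.ofReal_mul (by positivity), ENNReal.ofReal_mul hG0.le,
              ← hP, ← hG, ← hT, div_eq_mul_inv, div_eq_mul_inv,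
              ENNReal.mul_inv (Or.inl hPne) (Or.inl hPtop),
              ENNReal.mul_inv (Or.inl hGne) (Or.inl hGtop), hCP]
            ring
end

section
/- Let ρ(x) = e^{−|x|} on ℝ^d and μ(dx) = |x|^α dx with α > 0. Then there exist constants C, C' > 0 depending only on d and α such that C'(1 + t^α) ≤ G_ρ(t; μ) ≤ C(1 + t^α) for all t > 0. In particular G_ρ(t;μ) is finite for each t but limsup_{t→∞} G_ρ(t;μ) = ∞. -/
open Real MeasureTheory Filter Module

noncomputable def heatKernel (d : ℕ) (t : ℝ) (x : EuclideanSpace ℝ (Fin d)) : ℝ :=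
  (2 * Real.pi * t) ^ (-(d : ℝ) / 2) * Real.exp (-‖x‖ ^ 2 / (2 * t))

-- exp lower bound: x^k * exp(-(b*x)) ≤ k!/b^k
lemma aux_pow_exp {b x : ℝ} (k : ℕ) (hb : 0 < b) (hx : 0 ≤ x) :
    x ^ k * Real.exp (-(b * x)) ≤ k.factorial / b ^ k := by
  have h1 : (b * x) ^ k / k.factorial ≤ Real.exp (b * x) := by
    calc (b * x) ^ k / k.factorial
        ≤ ∑ i ∈ Finset.range (k + 1), (b * x) ^ i / i.factorial :=
          Finset.single_le_sum (f := fun i => (b * x) ^ i / i.factorial)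
            (fun i _ => by positivity) (Finset.self_mem_range_succ k)
      _ ≤ Real.exp (b * x) := Real.sum_le_exp_of_nonneg (by positivity) _
  have h2 : (b * x) ^ k ≤ k.factorial * Real.exp (b * x) := by
    have hk : (0:ℝ) < k.factorial := by positivity
    rw [div_le_iff₀ hk] at h1
    linarith [h1]
  have hE : (0:ℝ) < Real.exp (b * x) := Real.exp_pos _
  have hbk : (0:ℝ) < b ^ k := by positivity
  rw [Real.exp_neg, ← div_eq_mul_inv, div_le_div_iff₀ hE hbk]
  rw [mul_pow] at h2
  nlinarith [h2]

-- (1+r)^k * exp(-(b*r)) ≤ exp b * k!/b^k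
lemma aux_one_add_pow_exp {b r : ℝ} (k : ℕ) (hb : 0 < b) (hr : 0 ≤ r) :
    (1 + r) ^ k * Real.exp (-(b * r)) ≤ Real.exp b * (k.factorial / b ^ k) := by
  have h0 : (0:ℝ) ≤ 1 + r := by linarith
  have h := aux_pow_exp k hb (by linarith : (0:ℝ) ≤ 1 + r)
  have : Real.exp (-(b * r)) = Real.exp b * Real.exp (-(b * (1 + r))) := by
    rw [← Real.exp_add]; ring_nf
  rw [this]
  calc (1 + r) ^ k * (Real.exp b * Real.exp (-(b * (1 + r))))
      = Real.exp b * ((1 + r) ^ k * Real.exp (-(b * (1 + r)))) := by ring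
    _ ≤ Real.exp b * (k.factorial / b ^ k) := by
        exact mul_le_mul_of_nonneg_left h (Real.exp_pos b).le

lemma rpow_le_one_add_pow {α a : ℝ} (hα : 0 < α) (ha : 0 ≤ a) :
    a ^ α ≤ (1 + a) ^ (⌈α⌉₊ : ℕ) := by
  have h1 : a ^ α ≤ (1 + a) ^ α := Real.rpow_le_rpow ha (by linarith) hα.le
  have h2 : (1 + a) ^ α ≤ (1 + a) ^ (⌈α⌉₊ : ℝ) :=
    Real.rpow_le_rpow_of_exponent_le (by linarith) (Nat.le_ceil α)
  calc a ^ α ≤ (1 + a) ^ α := h1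
    _ ≤ (1 + a) ^ (⌈α⌉₊ : ℝ) := h2
    _ = (1 + a) ^ (⌈α⌉₊ : ℕ) := Real.rpow_natCast _ _

lemma rpow_le_add_of_le_max {α a c e : ℝ} (hα : 0 ≤ α) (ha : 0 ≤ a) (hc : 0 ≤ c) (he : 0 ≤ e)
    (h : a ≤ max c e) : a ^ α ≤ c ^ α + e ^ α := by
  rcases max_cases c e with ⟨hm, _⟩ | ⟨hm, _⟩
  · rw [hm] at h
    calc a ^ α ≤ c ^ α := Real.rpow_le_rpow ha h hα
      _ ≤ c ^ α + e ^ α := le_add_of_nonneg_right (Real.rpow_nonneg he α)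
  · rw [hm] at h
    calc a ^ α ≤ e ^ α := Real.rpow_le_rpow ha h hα
      _ ≤ c ^ α + e ^ α := le_add_of_nonneg_left (Real.rpow_nonneg hc α)

lemma rpow_add_le_two_rpow {α a b : ℝ} (hα : 0 ≤ α) (ha : 0 ≤ a) (hb : 0 ≤ b) :
    (a + b) ^ α ≤ 2 ^ α * (a ^ α + b ^ α) := by
  have hmax : (0:ℝ) ≤ max a b := le_max_of_le_left ha
  have h1 : a + b ≤ 2 * max a b := by
    rcases max_cases a b with ⟨hm, h⟩ | ⟨hm, h⟩ <;> rw [hm] <;> linarith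
  have h2 : (a + b) ^ α ≤ (2 * max a b) ^ α :=
    Real.rpow_le_rpow (by linarith) h1 hα
  rw [Real.mul_rpow (by norm_num) hmax] at h2
  refine h2.trans (mul_le_mul_of_nonneg_left ?_ (Real.rpow_nonneg (by norm_num) α))
  exact rpow_le_add_of_le_max hα hmax ha hb le_rfl

section Euclid
variable {d : ℕ}
local notation "Ed" => EuclideanSpace ℝ (Fin d)

lemma integrable_poly_exp (k : ℕ) {b : ℝ} (hb : 0 < b) :
    Integrable (fun x : Ed => (1 + ‖x‖) ^ k * Real.exp (-(b * ‖x‖))) := by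
  set r : ℝ := (d : ℝ) + 1 with hr
  have hnr : (finrank ℝ Ed : ℝ) < r := by
    rw [finrank_euclideanSpace_fin]; simp [hr]
  have hint := (integrable_one_add_norm (E := EuclideanSpace ℝ (Fin d)) (μ := volume) hnr).const_mul
      (Real.exp b * ((k + d + 1).factorial / b ^ (k + d + 1)))
  refine hint.mono' ?_ ?_
  · exact (((continuous_const.add continuous_norm).pow k).mul
      ((continuous_const.mul continuous_norm).neg.rexp)).aestronglyMeasurable
  · refine Filter.Eventually.of_forall fun x => ?_
    have h1 : (0:ℝ) < 1 + ‖x‖ := by positivity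
    have hpow : (1 + ‖x‖) ^ (-r) = ((1 + ‖x‖) ^ (d + 1 : ℕ))⁻¹ := by
      rw [← Real.rpow_natCast (1 + ‖x‖) (d+1), ← Real.rpow_neg h1.le]
      norm_num [hr]
    have key : (1 + ‖x‖) ^ (k + d + 1) * Real.exp (-(b * ‖x‖))
        ≤ Real.exp b * ((k + d + 1).factorial / b ^ (k + d + 1)) :=
      aux_one_add_pow_exp _ hb (norm_nonneg x)
    have hnn : (0:ℝ) ≤ (1 + ‖x‖) ^ k * Real.exp (-(b * ‖x‖)) := by positivity
    rw [Real.norm_of_nonneg hnn, hpow]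
    rw [← div_eq_mul_inv, le_div_iff₀ (by positivity : (0:ℝ) < (1 + ‖x‖) ^ (d + 1 : ℕ))]
    calc (1 + ‖x‖) ^ k * Real.exp (-(b * ‖x‖)) * (1 + ‖x‖) ^ (d + 1 : ℕ)
        = (1 + ‖x‖) ^ (k + d + 1) * Real.exp (-(b * ‖x‖)) := by
          rw [show (1 + ‖x‖) ^ k * Real.exp (-(b * ‖x‖)) * (1 + ‖x‖) ^ (d + 1 : ℕ)
              = (1 + ‖x‖) ^ k * (1 + ‖x‖) ^ (d + 1 : ℕ) * Real.exp (-(b * ‖x‖)) from by ring,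
            ← pow_add, show k + (d+1) = k + d + 1 from by ring]
      _ ≤ Real.exp b * ((k + d + 1).factorial / b ^ (k + d + 1)) := key

lemma integrable_poly_gauss (k : ℕ) {b : ℝ} (hb : 0 < b) :
    Integrable (fun x : Ed => (1 + ‖x‖) ^ k * Real.exp (-(b * ‖x‖ ^ 2))) := by
  refine ((integrable_poly_exp (d := d) k hb).const_mul (Real.exp b)).mono' ?_ ?_
  · exact (((continuous_const.add continuous_norm).pow k).mul
      ((continuous_const.mul (continuous_norm.pow 2)).neg.rexp)).aestronglyMeasurable
  · refine Filter.Eventually.of_forall fun x => ?_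
    have hnn : (0:ℝ) ≤ (1 + ‖x‖) ^ k * Real.exp (-(b * ‖x‖ ^ 2)) := by positivity
    rw [Real.norm_of_nonneg hnn]
    have hexp : Real.exp (-(b * ‖x‖ ^ 2)) ≤ Real.exp b * Real.exp (-(b * ‖x‖)) := by
      rw [← Real.exp_add, Real.exp_le_exp]
      nlinarith [norm_nonneg x, sq_nonneg (‖x‖ - 1)]
    calc (1 + ‖x‖) ^ k * Real.exp (-(b * ‖x‖ ^ 2))
        ≤ (1 + ‖x‖) ^ k * (Real.exp b * Real.exp (-(b * ‖x‖))) :=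
          mul_le_mul_of_nonneg_left hexp (by positivity)
      _ = Real.exp b * ((1 + ‖x‖) ^ k * Real.exp (-(b * ‖x‖))) := by ring

lemma hk_pos {t : ℝ} (ht : 0 < t) (x : Ed) : 0 < heatKernel d t x := by
  unfold heatKernel
  have h2 : (0:ℝ) < 2 * Real.pi * t := by positivity
  positivity

lemma hk_eq {t : ℝ} (ht : 0 < t) (x : Ed) :
    heatKernel d t x = (2 * Real.pi * t) ^ (-(d:ℝ) / 2) * Real.exp (-(1 / (2 * t) * ‖x‖ ^ 2)) := by
  unfold heatKernel
  congr 1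
  rw [show -(1 / (2 * t) * ‖x‖ ^ 2) = -‖x‖ ^ 2 / (2 * t) from by field_simp]

lemma integrable_hk_poly {t : ℝ} (ht : 0 < t) (k : ℕ) :
    Integrable (fun z : Ed => heatKernel d t z * (1 + ‖z‖) ^ k) := by
  have : (fun z : Ed => heatKernel d t z * (1 + ‖z‖) ^ k)
      = fun z : Ed => (2 * Real.pi * t) ^ (-(d:ℝ) / 2)
        * ((1 + ‖z‖) ^ k * Real.exp (-(1 / (2 * t) * ‖z‖ ^ 2))) := by
    funext z; rw [hk_eq ht]; ring
  rw [this]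
  exact (integrable_poly_gauss (d := d) k (by positivity)).const_mul _

lemma hk_cont (t : ℝ) : Continuous (heatKernel d t : Ed → ℝ) := by
  unfold heatKernel
  exact continuous_const.mul (((continuous_norm.pow 2).neg.div_const _).rexp)

lemma hk_neg (t : ℝ) (x : Ed) : heatKernel d t (-x) = heatKernel d t x := by
  simp [heatKernel]

lemma cont_rpow_norm {α : ℝ} (hα : 0 < α) : Continuous (fun x : Ed => ‖x‖ ^ α) := by
  rw [continuous_iff_continuousAt]
  intro x
  exact (Real.continuousAt_rpow_const ‖x‖ α (Or.inr hα.le)).comp continuous_norm.continuousAt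

lemma hk_smul {t : ℝ} (ht : 0 < t) (w : Ed) :
    heatKernel d t (Real.sqrt t • w) = t ^ (-(d:ℝ) / 2) * heatKernel d 1 w := by
  unfold heatKernel
  have hnorm : ‖Real.sqrt t • w‖ ^ 2 = t * ‖w‖ ^ 2 := by
    rw [norm_smul, Real.norm_eq_abs, abs_of_nonneg (Real.sqrt_nonneg t), mul_pow,
      Real.sq_sqrt ht.le]
  rw [hnorm]
  have hexp : -(t * ‖w‖ ^ 2) / (2 * t) = -‖w‖ ^ 2 / (2 * 1) := by
    field_simp
  rw [hexp]
  have hc : (2 * Real.pi * t) ^ (-(d:ℝ) / 2)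
      = t ^ (-(d:ℝ) / 2) * (2 * Real.pi * 1) ^ (-(d:ℝ) / 2) := by
    rw [mul_one, show (2 * Real.pi * t) = (2 * Real.pi) * t from rfl,
      Real.mul_rpow (by positivity) ht.le]
    ring
  rw [hc]; ring

lemma hk_moment {t : ℝ} (ht : 0 < t) (β : ℝ) (hβ : 0 ≤ β) :
    ∫ z : Ed, heatKernel d t z * ‖z‖ ^ β
      = t ^ (β / 2) * ∫ w : Ed, heatKernel d 1 w * ‖w‖ ^ β := by
  set s := Real.sqrt t with hs
  have hs0 : 0 < s := Real.sqrt_pos.2 ht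
  have h := Measure.integral_comp_smul_of_nonneg (μ := (volume : Measure Ed))
    (fun z : Ed => heatKernel d t z * ‖z‖ ^ β) s (hR := hs0.le)
  have hfin : finrank ℝ Ed = d := finrank_euclideanSpace_fin
  have hpt : ∀ w : Ed, heatKernel d t (s • w) * ‖s • w‖ ^ β
      = (t ^ (-(d:ℝ) / 2) * t ^ (β / 2)) * (heatKernel d 1 w * ‖w‖ ^ β) := by
    intro w
    rw [hk_smul ht w, norm_smul, Real.norm_eq_abs, abs_of_nonneg hs0.le,
      Real.mul_rpow hs0.le (norm_nonneg w)]
    have : s ^ β = t ^ (β / 2) := by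
      rw [hs, Real.sqrt_eq_rpow, ← Real.rpow_mul ht.le]
      congr 1; ring
    rw [this]; ring
  simp only [hpt] at h
  rw [integral_const_mul] at h
  -- we derive ∫ f = s^d * ...
  rw [hfin] at h
  have hsd : (0:ℝ) < s ^ d := by positivity
  have h2 : ∫ z : Ed, heatKernel d t z * ‖z‖ ^ β
      = s ^ d * ((t ^ (-(d:ℝ) / 2) * t ^ (β / 2)) * ∫ w : Ed, heatKernel d 1 w * ‖w‖ ^ β) := by
    rw [smul_eq_mul, eq_comm, inv_mul_eq_iff_eq_mul₀ hsd.ne'] at h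
    exact h
  rw [h2]
  have hsd2 : s ^ d = t ^ ((d:ℝ) / 2) := by
    rw [hs, Real.sqrt_eq_rpow, ← Real.rpow_natCast (t ^ ((1:ℝ)/2)) d, ← Real.rpow_mul ht.le]
    congr 1; ring
  rw [hsd2, ← mul_assoc, ← mul_assoc, ← Real.rpow_add ht, ← Real.rpow_add ht]
  congr 2
  ring

lemma norm_le_max_aux (x z : Ed) :
    ‖x‖ ≤ max ‖x - z‖ ‖x + z‖ ∧ ‖z‖ ≤ max ‖x - z‖ ‖x + z‖ := by
  constructor
  · have h1 : x + x = (x - z) + (x + z) := by abel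
    have h2 : ‖x + x‖ ≤ ‖x - z‖ + ‖x + z‖ := by rw [h1]; exact norm_add_le _ _
    have h3 : ‖x + x‖ = 2 * ‖x‖ := by
      rw [show x + x = (2:ℝ) • x from (two_smul ℝ x).symm, norm_smul]
      simp
    have h4 : ‖x - z‖ + ‖x + z‖ ≤ 2 * max ‖x - z‖ ‖x + z‖ := by
      rcases max_cases ‖x - z‖ ‖x + z‖ with ⟨hm, h⟩ | ⟨hm, h⟩ <;> rw [hm] <;> linarith
    linarith [h3 ▸ h2]
  · have h1 : z + z = (x + z) - (x - z) := by abel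
    have h2 : ‖z + z‖ ≤ ‖x + z‖ + ‖x - z‖ := by rw [h1]; exact norm_sub_le _ _
    have h3 : ‖z + z‖ = 2 * ‖z‖ := by
      rw [show z + z = (2:ℝ) • z from (two_smul ℝ z).symm, norm_smul]
      simp
    have h4 : ‖x - z‖ + ‖x + z‖ ≤ 2 * max ‖x - z‖ ‖x + z‖ := by
      rcases max_cases ‖x - z‖ ‖x + z‖ with ⟨hm, h⟩ | ⟨hm, h⟩ <;> rw [hm] <;> linarith
    linarith [h3 ▸ h2]

lemma int_hk_mass {t : ℝ} (ht : 0 < t) : Integrable (fun z : Ed => heatKernel d t z) := by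
  simpa using integrable_hk_poly ht 0

lemma int_hk_rpow {t α : ℝ} (ht : 0 < t) (hα : 0 < α) (c : Ed) :
    Integrable (fun z : Ed => heatKernel d t z * ‖c - z‖ ^ α) := by
  set n := ⌈α⌉₊ with hn
  refine ((integrable_hk_poly ht n).const_mul ((1 + ‖c‖) ^ n)).mono' ?_ ?_
  · exact ((hk_cont t).mul
      ((cont_rpow_norm hα).comp (continuous_const.sub continuous_id))).aestronglyMeasurable
  · refine Filter.Eventually.of_forall fun z => ?_
    have h0 : 0 ≤ heatKernel d t z := (hk_pos ht z).le
    have hb : ‖c - z‖ ^ α ≤ (1 + ‖c‖) ^ n * (1 + ‖z‖) ^ n := by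
      have h1 : ‖c - z‖ ≤ ‖c‖ + ‖z‖ := norm_sub_le _ _
      have h2 : ‖c - z‖ ^ α ≤ (1 + (‖c‖ + ‖z‖)) ^ n :=
        le_trans (Real.rpow_le_rpow (norm_nonneg _) h1 hα.le)
          (rpow_le_one_add_pow hα (by positivity))
      refine h2.trans ?_
      have h3 : 1 + (‖c‖ + ‖z‖) ≤ (1 + ‖c‖) * (1 + ‖z‖) := by
        nlinarith [norm_nonneg c, norm_nonneg z]
      calc (1 + (‖c‖ + ‖z‖)) ^ n ≤ ((1 + ‖c‖) * (1 + ‖z‖)) ^ n :=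
            pow_le_pow_left₀ (by positivity) h3 n
        _ = (1 + ‖c‖) ^ n * (1 + ‖z‖) ^ n := mul_pow _ _ _
    rw [Real.norm_of_nonneg (by positivity)]
    calc heatKernel d t z * ‖c - z‖ ^ α
        ≤ heatKernel d t z * ((1 + ‖c‖) ^ n * (1 + ‖z‖) ^ n) :=
          mul_le_mul_of_nonneg_left hb h0
      _ = (1 + ‖c‖) ^ n * (heatKernel d t z * (1 + ‖z‖) ^ n) := by ring

lemma int_hk_rpow0 {t α : ℝ} (ht : 0 < t) (hα : 0 < α) :
    Integrable (fun z : Ed => heatKernel d t z * ‖z‖ ^ α) := by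
  simpa using int_hk_rpow ht hα 0

lemma int_hk_rpow_add {t α : ℝ} (ht : 0 < t) (hα : 0 < α) (c : Ed) :
    Integrable (fun z : Ed => heatKernel d t z * ‖c + z‖ ^ α) := by
  have h := int_hk_rpow ht hα (-c)
  refine h.congr (Filter.Eventually.of_forall fun z => ?_)
  simp only []
  rw [show -c - z = -(c + z) from by abel, norm_neg]

lemma J_eq {t α : ℝ} (x : Ed) :
    (∫ y : Ed, heatKernel d t (x - y) * ‖y‖ ^ α)
      = ∫ z : Ed, heatKernel d t z * ‖x - z‖ ^ α := by
  rw [← MeasureTheory.integral_sub_left_eq_self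
    (fun z : Ed => heatKernel d t z * ‖x - z‖ ^ α) volume x]
  congr 1
  funext y
  simp [sub_sub_cancel]

lemma J_sym {t α : ℝ} (x : Ed) :
    (∫ z : Ed, heatKernel d t z * ‖x - z‖ ^ α)
      = ∫ z : Ed, heatKernel d t z * ‖x + z‖ ^ α := by
  rw [← MeasureTheory.integral_neg_eq_self
    (fun z : Ed => heatKernel d t z * ‖x + z‖ ^ α) volume]
  congr 1
  funext z
  rw [hk_neg]
  congr 2

end Euclid

noncomputable def hkMass (d : ℕ) : ℝ := ∫ w : EuclideanSpace ℝ (Fin d), heatKernel d 1 w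

noncomputable def hkMom (d : ℕ) (α : ℝ) : ℝ :=
  ∫ w : EuclideanSpace ℝ (Fin d), heatKernel d 1 w * ‖w‖ ^ α

section Euclid2
variable {d : ℕ}
local notation "Ed" => EuclideanSpace ℝ (Fin d)

lemma hk_mass_eq {t : ℝ} (ht : 0 < t) : ∫ z : Ed, heatKernel d t z = hkMass d := by
  have h := hk_moment (d := d) ht 0 le_rfl
  simp only [Real.rpow_zero, mul_one, zero_div, Real.rpow_zero, one_mul] at h
  exact h

lemma hk_mom_eq {t α : ℝ} (ht : 0 < t) (hα : 0 ≤ α) :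
    ∫ z : Ed, heatKernel d t z * ‖z‖ ^ α = t ^ (α / 2) * hkMom d α :=
  hk_moment ht α hα

lemma J_nonneg {t α : ℝ} (ht : 0 < t) (x : Ed) :
    0 ≤ ∫ y : Ed, heatKernel d t (x - y) * ‖y‖ ^ α :=
  integral_nonneg fun y => mul_nonneg (hk_pos ht _).le (Real.rpow_nonneg (norm_nonneg _) _)

lemma J_upper {t α : ℝ} (ht : 0 < t) (hα : 0 < α) (x : Ed) :
    (∫ y : Ed, heatKernel d t (x - y) * ‖y‖ ^ α)
      ≤ 2 ^ α * (hkMass d * ‖x‖ ^ α + hkMom d α * t ^ (α / 2)) := by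
  rw [J_eq]
  have hmono : (∫ z : Ed, heatKernel d t z * ‖x - z‖ ^ α)
      ≤ ∫ z : Ed, ((2 ^ α * ‖x‖ ^ α) * heatKernel d t z
          + 2 ^ α * (heatKernel d t z * ‖z‖ ^ α)) := by
    refine integral_mono (int_hk_rpow ht hα x)
      (((int_hk_mass ht).const_mul _).add ((int_hk_rpow0 ht hα).const_mul _)) fun z => ?_
    have h0 : 0 ≤ heatKernel d t z := (hk_pos ht z).le
    have h1 : ‖x - z‖ ^ α ≤ 2 ^ α * (‖x‖ ^ α + ‖z‖ ^ α) := by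
      refine le_trans (Real.rpow_le_rpow (norm_nonneg _) (norm_sub_le x z) hα.le) ?_
      exact rpow_add_le_two_rpow hα.le (norm_nonneg x) (norm_nonneg z)
    calc heatKernel d t z * ‖x - z‖ ^ α
        ≤ heatKernel d t z * (2 ^ α * (‖x‖ ^ α + ‖z‖ ^ α)) := mul_le_mul_of_nonneg_left h1 h0
      _ = (2 ^ α * ‖x‖ ^ α) * heatKernel d t z + 2 ^ α * (heatKernel d t z * ‖z‖ ^ α) := by
          ring
  refine hmono.trans ?_
  rw [integral_add ((int_hk_mass ht).const_mul _) ((int_hk_rpow0 ht hα).const_mul _),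
    integral_const_mul, integral_const_mul, hk_mass_eq ht, hk_mom_eq ht hα.le]
  apply le_of_eq
  ring

lemma J_lower {t α : ℝ} (ht : 0 < t) (hα : 0 < α) (x : Ed) :
    hkMass d * ‖x‖ ^ α + hkMom d α * t ^ (α / 2)
      ≤ 4 * ∫ y : Ed, heatKernel d t (x - y) * ‖y‖ ^ α := by
  rw [J_eq]
  set J := ∫ z : Ed, heatKernel d t z * ‖x - z‖ ^ α with hJ
  have hint_sub := int_hk_rpow ht hα x
  have hint_add := int_hk_rpow_add ht hα x
  have hsum : ∫ z : Ed, (heatKernel d t z * ‖x - z‖ ^ α + heatKernel d t z * ‖x + z‖ ^ α)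
      = 2 * J := by
    rw [integral_add hint_sub hint_add, ← J_sym]
    ring
  have key : ∀ c : ℝ, (∀ z : Ed, c ≤ ‖x - z‖ ^ α + ‖x + z‖ ^ α) → 0 ≤ c →
      (∫ z : Ed, heatKernel d t z * c) ≤ 2 * J := by
    intro c hc hc0
    rw [← hsum]
    refine integral_mono ((int_hk_mass ht).mul_const _) (hint_sub.add hint_add) fun z => ?_
    have h0 : 0 ≤ heatKernel d t z := (hk_pos ht z).le
    calc heatKernel d t z * c
        ≤ heatKernel d t z * (‖x - z‖ ^ α + ‖x + z‖ ^ α) :=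
          mul_le_mul_of_nonneg_left (hc z) h0
      _ = heatKernel d t z * ‖x - z‖ ^ α + heatKernel d t z * ‖x + z‖ ^ α := by ring
  have h1 : hkMass d * ‖x‖ ^ α ≤ 2 * J := by
    have := key (‖x‖ ^ α) (fun z => rpow_le_add_of_le_max hα.le (norm_nonneg x)
        (norm_nonneg _) (norm_nonneg _) (norm_le_max_aux x z).1)
      (Real.rpow_nonneg (norm_nonneg x) α)
    rwa [integral_mul_const, hk_mass_eq ht] at this
  have h2 : hkMom d α * t ^ (α / 2) ≤ 2 * J := by
    have hmono : (∫ z : Ed, heatKernel d t z * ‖z‖ ^ α)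
        ≤ ∫ z : Ed, (heatKernel d t z * ‖x - z‖ ^ α + heatKernel d t z * ‖x + z‖ ^ α) := by
      refine integral_mono (int_hk_rpow0 ht hα) (hint_sub.add hint_add) fun z => ?_
      have h0 : 0 ≤ heatKernel d t z := (hk_pos ht z).le
      calc heatKernel d t z * ‖z‖ ^ α
          ≤ heatKernel d t z * (‖x - z‖ ^ α + ‖x + z‖ ^ α) :=
            mul_le_mul_of_nonneg_left (rpow_le_add_of_le_max hα.le (norm_nonneg z)
              (norm_nonneg _) (norm_nonneg _) (norm_le_max_aux x z).2) h0
        _ = heatKernel d t z * ‖x - z‖ ^ α + heatKernel d t z * ‖x + z‖ ^ α := by ring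
    rw [hsum, hk_mom_eq ht hα.le] at hmono
    linarith [hmono]
  linarith

lemma J_meas {t α : ℝ} (hα : 0 < α) :
    StronglyMeasurable (fun x : Ed => ∫ y : Ed, heatKernel d t (x - y) * ‖y‖ ^ α) := by
  have hc : Continuous (fun p : Ed × Ed => heatKernel d t (p.1 - p.2) * ‖p.2‖ ^ α) :=
    ((hk_cont t).comp (continuous_fst.sub continuous_snd)).mul
      ((cont_rpow_norm hα).comp continuous_snd)
  exact hc.stronglyMeasurable.integral_prod_right'

end Euclid2

set_option maxHeartbeats 2000000 in
theorem growing_tail_G_rho (d : ℕ) (hd : 1 ≤ d) (α : ℝ) (hα : 0 < α) :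
    ∃ C C' : ℝ, 0 < C ∧ 0 < C' ∧
      (∀ t : ℝ, 0 < t →
        C' * (1 + t ^ α)
            ≤ (∫ x, (∫ y, heatKernel d t (x - y) * ‖y‖ ^ α) ^ 2 * Real.exp (-‖x‖))
          ∧ (∫ x, (∫ y, heatKernel d t (x - y) * ‖y‖ ^ α) ^ 2 * Real.exp (-‖x‖))
            ≤ C * (1 + t ^ α))
      ∧ Tendsto
          (fun t : ℝ => ∫ x, (∫ y, heatKernel d t (x - y) * ‖y‖ ^ α) ^ 2 * Real.exp (-‖x‖))
          atTop atTop := by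
  classical
  set n := ⌈α⌉₊ with hn
  set cA := hkMass d with hcA
  set cB := hkMom d α with hcB
  -- basic integrable functions
  have intK0 : Integrable (fun x : EuclideanSpace ℝ (Fin d) => Real.exp (-‖x‖)) := by
    simpa using integrable_poly_exp (d := d) 0 one_pos
  have base2 : Integrable
      (fun x : EuclideanSpace ℝ (Fin d) => (1 + ‖x‖) ^ (n * 2) * Real.exp (-‖x‖)) := by
    simpa using integrable_poly_exp (d := d) (n * 2) one_pos
  have intK2 : Integrable
      (fun x : EuclideanSpace ℝ (Fin d) => (‖x‖ ^ α) ^ 2 * Real.exp (-‖x‖)) := by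
    refine base2.mono' ?_ ?_
    · exact (((cont_rpow_norm hα).pow 2).mul (continuous_norm.neg.rexp)).aestronglyMeasurable
    · refine Filter.Eventually.of_forall fun x => ?_
      have hb : (‖x‖ ^ α) ^ 2 ≤ (1 + ‖x‖) ^ (n * 2) := by
        rw [pow_mul]
        exact pow_le_pow_left₀ (Real.rpow_nonneg (norm_nonneg x) α)
          (rpow_le_one_add_pow hα (norm_nonneg x)) 2
      rw [Real.norm_of_nonneg (by positivity)]
      exact mul_le_mul_of_nonneg_right hb (Real.exp_pos _).le
  set K0 : ℝ := ∫ x : EuclideanSpace ℝ (Fin d), Real.exp (-‖x‖) with hK0def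
  set K2 : ℝ := ∫ x : EuclideanSpace ℝ (Fin d), (‖x‖ ^ α) ^ 2 * Real.exp (-‖x‖) with hK2def
  -- positivity of constants
  have hvne : (EuclideanSpace.single (⟨0, hd⟩ : Fin d) (1 : ℝ)) ≠ 0 := by
    intro h
    have h2 := EuclideanSpace.norm_single (𝕜 := ℝ) (⟨0, hd⟩ : Fin d) (1 : ℝ)
    rw [h] at h2
    simp at h2
  have hcompl : (0 : ENNReal) < volume ({(0 : EuclideanSpace ℝ (Fin d))}ᶜ) :=
    (isClosed_singleton.isOpen_compl).measure_pos volume ⟨_, Set.mem_compl_singleton_iff.2 hvne⟩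
  have hK0pos : 0 < K0 := by
    rw [hK0def]
    refine (integral_pos_iff_support_of_nonneg (fun x => (Real.exp_pos _).le) intK0).2 ?_
    have hsupp : Function.support (fun x : EuclideanSpace ℝ (Fin d) => Real.exp (-‖x‖))
        = Set.univ := Set.eq_univ_of_forall fun x => (Real.exp_pos _).ne'
    rw [hsupp]
    exact isOpen_univ.measure_pos volume ⟨0, trivial⟩
  have hK2pos : 0 < K2 := by
    rw [hK2def]
    refine (integral_pos_iff_support_of_nonneg (fun x => by positivity) intK2).2 ?_
    refine lt_of_lt_of_le hcompl (measure_mono fun x hx => ?_)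
    have hx0 : x ≠ 0 := Set.mem_compl_singleton_iff.1 hx
    have hnx : (0:ℝ) < ‖x‖ := norm_pos_iff.2 hx0
    have : 0 < (‖x‖ ^ α) ^ 2 * Real.exp (-‖x‖) := by positivity
    exact this.ne'
  have hcApos : 0 < cA := by
    rw [hcA]
    unfold hkMass
    refine (integral_pos_iff_support_of_nonneg (fun w => (hk_pos one_pos w).le)
      (int_hk_mass one_pos)).2 ?_
    have hsupp : Function.support (fun w : EuclideanSpace ℝ (Fin d) => heatKernel d 1 w)
        = Set.univ := Set.eq_univ_of_forall fun w => (hk_pos one_pos w).ne'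
    rw [hsupp]
    exact isOpen_univ.measure_pos volume ⟨0, trivial⟩
  have hcBpos : 0 < cB := by
    rw [hcB]
    unfold hkMom
    refine (integral_pos_iff_support_of_nonneg
      (fun w => mul_nonneg (hk_pos one_pos w).le (Real.rpow_nonneg (norm_nonneg w) α))
      (int_hk_rpow0 one_pos hα)).2 ?_
    refine lt_of_lt_of_le hcompl (measure_mono fun w hw => ?_)
    have hw0 : w ≠ 0 := Set.mem_compl_singleton_iff.1 hw
    exact (mul_pos (hk_pos one_pos w)
      (Real.rpow_pos_of_pos (norm_pos_iff.2 hw0) α)).ne'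
  set c2 := (2 : ℝ) ^ α with hc2
  have hc2pos : 0 < c2 := Real.rpow_pos_of_pos two_pos α
  set A := cA ^ 2 * K2 with hA
  set B := cB ^ 2 * K0 with hB
  have hApos : 0 < A := mul_pos (pow_pos hcApos 2) hK2pos
  have hBpos : 0 < B := mul_pos (pow_pos hcBpos 2) hK0pos
  have hmain : ∀ t : ℝ, 0 < t →
      ((1 / 16) * min A B) * (1 + t ^ α)
          ≤ (∫ x, (∫ y, heatKernel d t (x - y) * ‖y‖ ^ α) ^ 2 * Real.exp (-‖x‖))
        ∧ (∫ x, (∫ y, heatKernel d t (x - y) * ‖y‖ ^ α) ^ 2 * Real.exp (-‖x‖))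
          ≤ (2 * c2 ^ 2 * max A B) * (1 + t ^ α) := by
    intro t ht
    have htα : (0:ℝ) < t ^ α := Real.rpow_pos_of_pos ht α
    have ht2 : t ^ (α / 2) * t ^ (α / 2) = t ^ α := by
      rw [← Real.rpow_add ht]; congr 1; ring
    have htp : (0:ℝ) ≤ t ^ (α / 2) := (Real.rpow_pos_of_pos ht _).le
    set Jf : EuclideanSpace ℝ (Fin d) → ℝ :=
      fun x => ∫ y, heatKernel d t (x - y) * ‖y‖ ^ α with hJf
    have hJ0 : ∀ x, 0 ≤ Jf x := fun x => J_nonneg ht x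
    have hJU : ∀ x, Jf x ≤ c2 * (cA * ‖x‖ ^ α + cB * t ^ (α / 2)) := fun x => J_upper ht hα x
    have hJL : ∀ x, cA * ‖x‖ ^ α + cB * t ^ (α / 2) ≤ 4 * Jf x := fun x => J_lower ht hα x
    -- comparison functions
    set u : EuclideanSpace ℝ (Fin d) → ℝ := fun x =>
      (2 * c2 ^ 2 * cA ^ 2) * ((‖x‖ ^ α) ^ 2 * Real.exp (-‖x‖))
        + (2 * c2 ^ 2 * cB ^ 2 * t ^ α) * Real.exp (-‖x‖) with hu
    set l : EuclideanSpace ℝ (Fin d) → ℝ := fun x =>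
      ((1 / 16) * cA ^ 2) * ((‖x‖ ^ α) ^ 2 * Real.exp (-‖x‖))
        + ((1 / 16) * cB ^ 2 * t ^ α) * Real.exp (-‖x‖) with hl
    have intu : Integrable u := (intK2.const_mul _).add (intK0.const_mul _)
    have intl : Integrable l := (intK2.const_mul _).add (intK0.const_mul _)
    have hptU : ∀ x, (Jf x) ^ 2 * Real.exp (-‖x‖) ≤ u x := by
      intro x
      have ha0 : (0:ℝ) ≤ cA * ‖x‖ ^ α :=
        mul_nonneg hcApos.le (Real.rpow_nonneg (norm_nonneg x) α)
      have hb0 : (0:ℝ) ≤ cB * t ^ (α / 2) := mul_nonneg hcBpos.le htp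
      have h1 : (Jf x) ^ 2 ≤ (c2 * (cA * ‖x‖ ^ α + cB * t ^ (α / 2))) ^ 2 :=
        pow_le_pow_left₀ (hJ0 x) (hJU x) 2
      have h2 : (c2 * (cA * ‖x‖ ^ α + cB * t ^ (α / 2))) ^ 2
          ≤ 2 * c2 ^ 2 * ((cA * ‖x‖ ^ α) ^ 2 + (cB * t ^ (α / 2)) ^ 2) := by
        nlinarith [sq_nonneg (cA * ‖x‖ ^ α - cB * t ^ (α / 2)), sq_nonneg c2]
      have h3 : (Jf x) ^ 2 * Real.exp (-‖x‖)
          ≤ (2 * c2 ^ 2 * ((cA * ‖x‖ ^ α) ^ 2 + (cB * t ^ (α / 2)) ^ 2)) * Real.exp (-‖x‖) :=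
        mul_le_mul_of_nonneg_right (h1.trans h2) (Real.exp_pos _).le
      refine h3.trans (le_of_eq ?_)
      rw [hu]
      have hbsq : (cB * t ^ (α / 2)) ^ 2 = cB ^ 2 * t ^ α := by
        rw [mul_pow, sq (t ^ (α / 2)), ht2]
      rw [hbsq, mul_pow]
      ring
    have hptL : ∀ x, l x ≤ (Jf x) ^ 2 * Real.exp (-‖x‖) := by
      intro x
      have ha0 : (0:ℝ) ≤ cA * ‖x‖ ^ α :=
        mul_nonneg hcApos.le (Real.rpow_nonneg (norm_nonneg x) α)
      have hb0 : (0:ℝ) ≤ cB * t ^ (α / 2) := mul_nonneg hcBpos.le htp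
      have h1 : (cA * ‖x‖ ^ α + cB * t ^ (α / 2)) ^ 2 ≤ (4 * Jf x) ^ 2 :=
        pow_le_pow_left₀ (by linarith) (hJL x) 2
      have h2 : (cA * ‖x‖ ^ α) ^ 2 + (cB * t ^ (α / 2)) ^ 2
          ≤ (cA * ‖x‖ ^ α + cB * t ^ (α / 2)) ^ 2 := by nlinarith [mul_nonneg ha0 hb0]
      have h3 : ((1:ℝ) / 16) * ((cA * ‖x‖ ^ α) ^ 2 + (cB * t ^ (α / 2)) ^ 2) ≤ (Jf x) ^ 2 := by
        nlinarith [h1, h2]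
      have h4 : ((1:ℝ) / 16) * ((cA * ‖x‖ ^ α) ^ 2 + (cB * t ^ (α / 2)) ^ 2) * Real.exp (-‖x‖)
          ≤ (Jf x) ^ 2 * Real.exp (-‖x‖) :=
        mul_le_mul_of_nonneg_right h3 (Real.exp_pos _).le
      refine le_trans (le_of_eq ?_) h4
      rw [hl]
      have hbsq : (cB * t ^ (α / 2)) ^ 2 = cB ^ 2 * t ^ α := by
        rw [mul_pow, sq (t ^ (α / 2)), ht2]
      rw [hbsq, mul_pow]
      ring
    have hsm : AEStronglyMeasurable
        (fun x : EuclideanSpace ℝ (Fin d) => (Jf x) ^ 2 * Real.exp (-‖x‖)) volume := by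
      have h1 := J_meas (d := d) (t := t) hα
      have heq : (fun x : EuclideanSpace ℝ (Fin d) => (Jf x) ^ 2 * Real.exp (-‖x‖))
          = fun x => (Jf x * Jf x) * Real.exp (-‖x‖) := by
        funext x; ring
      rw [heq]
      exact ((h1.mul h1).mul (continuous_norm.neg.rexp).stronglyMeasurable).aestronglyMeasurable
    have intF : Integrable
        (fun x : EuclideanSpace ℝ (Fin d) => (Jf x) ^ 2 * Real.exp (-‖x‖)) := by
      refine intu.mono' hsm (Filter.Eventually.of_forall fun x => ?_)
      rw [Real.norm_of_nonneg (mul_nonneg (sq_nonneg _) (Real.exp_pos _).le)]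
      exact hptU x
    have hintu : ∫ x, u x = (2 * c2 ^ 2 * cA ^ 2) * K2 + (2 * c2 ^ 2 * cB ^ 2 * t ^ α) * K0 := by
      rw [hu]
      rw [integral_add (intK2.const_mul _) (intK0.const_mul _), integral_const_mul,
        integral_const_mul, ← hK2def, ← hK0def]
    have hintl : ∫ x, l x = ((1 / 16) * cA ^ 2) * K2 + ((1 / 16) * cB ^ 2 * t ^ α) * K0 := by
      rw [hl]
      rw [integral_add (intK2.const_mul _) (intK0.const_mul _), integral_const_mul,
        integral_const_mul, ← hK2def, ← hK0def]
    have hFU : (∫ x, (Jf x) ^ 2 * Real.exp (-‖x‖)) ≤ ∫ x, u x :=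
      integral_mono intF intu hptU
    have hFL : (∫ x, l x) ≤ ∫ x, (Jf x) ^ 2 * Real.exp (-‖x‖) :=
      integral_mono intl intF hptL
    have hAM : A ≤ max A B := le_max_left A B
    have hBM : B ≤ max A B := le_max_right A B
    have hmA : min A B ≤ A := min_le_left A B
    have hmB : min A B ≤ B := min_le_right A B
    constructor
    · refine le_trans ?_ hFL
      rw [hintl]
      have e1 : ((1 / 16) * cA ^ 2) * K2 = (1/16) * A := by rw [hA]; ring
      have e2 : ((1 / 16) * cB ^ 2 * t ^ α) * K0 = (1/16) * (B * t ^ α) := by rw [hB]; ring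
      rw [e1, e2]
      nlinarith [mul_le_mul_of_nonneg_right hmB htα.le]
    · refine hFU.trans ?_
      rw [hintu]
      have e1 : (2 * c2 ^ 2 * cA ^ 2) * K2 = (2 * c2 ^ 2) * A := by rw [hA]; ring
      have e2 : (2 * c2 ^ 2 * cB ^ 2 * t ^ α) * K0 = (2 * c2 ^ 2) * (B * t ^ α) := by
        rw [hB]; ring
      rw [e1, e2]
      have hpos2 : (0:ℝ) ≤ 2 * c2 ^ 2 := by positivity
      nlinarith [mul_le_mul_of_nonneg_right hBM htα.le,
        mul_le_mul_of_nonneg_left hAM hpos2,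
        mul_le_mul_of_nonneg_left (mul_le_mul_of_nonneg_right hBM htα.le) hpos2]
  refine ⟨2 * c2 ^ 2 * max A B, (1 / 16) * min A B,
    by positivity,
    by have := lt_min hApos hBpos; positivity, hmain, ?_⟩
  have h1 : Tendsto (fun t : ℝ => ((1 / 16) * min A B) * (1 + t ^ α)) atTop atTop := by
    refine Tendsto.const_mul_atTop (by have := lt_min hApos hBpos; positivity) ?_
    exact tendsto_atTop_add_const_left atTop 1 (tendsto_rpow_atTop hα)
  refine tendsto_atTop_mono' atTop ?_ h1
  filter_upwards [eventually_gt_atTop (0:ℝ)] with t ht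
  exact (hmain t ht).1
end

section
/- Define ψ: [0,∞) → ℝ by ψ(r) = sgn(2−r)|r−2|^{α+1} + sgn(r−1)|r−1|^{α+1} for a fixed α > 0. Then inf_{r ≥ 0} ψ(r)/√(1 + r^{2α}) > 0. -/
open Real

theorem psi_uniform_lower_bound (α : ℝ) (hα : 0 < α) :
    ∃ c : ℝ, 0 < c ∧ ∀ r : ℝ, 0 ≤ r →
      c * Real.sqrt (1 + r ^ (2 * α))
        ≤ Real.sign (2 - r) * |r - 2| ^ (α + 1) + Real.sign (r - 1) * |r - 1| ^ (α + 1) := by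
  set c : ℝ := (2:ℝ) ^ (-(2*α+2)) with hc
  have hc0 : 0 < c := Real.rpow_pos_of_pos two_pos _
  refine ⟨c, hc0, ?_⟩
  intro r hr
  -- basic facts
  have h2pos : (0:ℝ) < 2 := two_pos
  have hone2 : (1:ℝ) ≤ (2:ℝ)^α := Real.one_le_rpow one_le_two hα.le
  have h2a1 : (2:ℝ)^(α+1) = (2:ℝ)^α * 2 := by
    rw [Real.rpow_add h2pos, Real.rpow_one]
  have hkey : c * (2:ℝ)^(α+1) = (2:ℝ)^(-(α+1)) := by
    rw [hc, ← Real.rpow_add h2pos]; ring_nf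
  have hcsmall : c ≤ 1/2 := by
    have : c ≤ (2:ℝ)^(-(1:ℝ)) :=
      Real.rpow_le_rpow_of_exponent_le one_le_two (by linarith)
    simpa [Real.rpow_neg_one] using this
  -- sqrt bound
  have hsq : Real.sqrt (1 + r ^ (2*α)) ≤ 1 + r ^ α := by
    have h2a : r ^ (2*α) = (r ^ α)^2 := by
      rw [two_mul, Real.rpow_add' hr (by positivity), sq]
    have h1 : 1 + r ^ (2*α) ≤ (1 + r ^ α)^2 := by
      have := Real.rpow_nonneg hr α
      nlinarith
    calc Real.sqrt (1 + r ^ (2*α)) ≤ Real.sqrt ((1 + r^α)^2) := Real.sqrt_le_sqrt h1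
      _ = 1 + r^α := Real.sqrt_sq (by positivity)
  have hrpa : 0 ≤ r ^ α := Real.rpow_nonneg hr α
  have hmul : c * Real.sqrt (1 + r ^ (2*α)) ≤ c * (1 + r^α) :=
    mul_le_mul_of_nonneg_left hsq hc0.le
  rcases le_or_gt r 1 with hr1 | hr1
  · -- case r ≤ 1
    have hsgn2 : Real.sign (2 - r) = 1 := Real.sign_of_pos (by linarith)
    have habs2 : |r - 2| = 2 - r := by rw [abs_of_nonpos (by linarith)]; ring
    have hterm1 : Real.sign (r-1) * |r-1|^(α+1) = -((1-r)^(α+1)) := by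
      rcases lt_or_eq_of_le hr1 with h | h
      · rw [Real.sign_of_neg (by linarith), abs_of_nonpos (by linarith)]
        ring_nf
      · rw [h]; simp [Real.zero_rpow (by positivity : α + 1 ≠ 0)]
    rw [hsgn2, habs2, hterm1, one_mul]
    have hψ : (1:ℝ) ≤ (2-r)^(α+1) - (1-r)^(α+1) := by
      have e1 : (2-r)^(α+1) = (2-r)^α * (2-r) := by
        rw [Real.rpow_add' (by linarith) (by positivity), Real.rpow_one]
      have e2 : (1-r)^(α+1) = (1-r)^α * (1-r) := by
        rw [Real.rpow_add' (by linarith) (by positivity), Real.rpow_one]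
      have h3 : (1-r)^α ≤ (2-r)^α := Real.rpow_le_rpow (by linarith) (by linarith) hα.le
      have h4 : (1:ℝ) ≤ (2-r)^α := Real.one_le_rpow (by linarith) hα.le
      have h5 : (0:ℝ) ≤ 1 - r := by linarith
      nlinarith
    have hra1 : r ^ α ≤ 1 := Real.rpow_le_one hr hr1 hα.le
    nlinarith
  rcases le_or_gt r 2 with hr2 | hr2
  · -- case 1 < r ≤ 2
    have hsgn1 : Real.sign (r - 1) = 1 := Real.sign_of_pos (by linarith)
    have habs1 : |r - 1| = r - 1 := abs_of_nonneg (by linarith)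
    have hterm2 : Real.sign (2-r) * |r-2|^(α+1) = (2-r)^(α+1) := by
      rcases lt_or_eq_of_le hr2 with h | h
      · rw [Real.sign_of_pos (by linarith), abs_of_nonpos (by linarith), one_mul]
        ring_nf
      · rw [h]; simp [Real.zero_rpow (by positivity : α + 1 ≠ 0)]
    rw [hsgn1, habs1, hterm2, one_mul]
    have hψ : (2:ℝ)^(-(α+1)) ≤ (2-r)^(α+1) + (r-1)^(α+1) := by
      have hinv : (2:ℝ)^(-(α+1)) = (2⁻¹:ℝ)^(α+1) := by
        rw [Real.rpow_neg (by norm_num), ← Real.inv_rpow (by norm_num)]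
      rcases le_or_gt r (3/2) with h | h
      · have : (2⁻¹:ℝ)^(α+1) ≤ (2-r)^(α+1) :=
          Real.rpow_le_rpow (by norm_num) (by linarith) (by positivity)
        have hnn : 0 ≤ (r-1)^(α+1) := Real.rpow_nonneg (by linarith) _
        rw [hinv]; linarith
      · have : (2⁻¹:ℝ)^(α+1) ≤ (r-1)^(α+1) :=
          Real.rpow_le_rpow (by norm_num) (by linarith) (by positivity)
        have hnn : 0 ≤ (2-r)^(α+1) := Real.rpow_nonneg (by linarith) _
        rw [hinv]; linarith
    have hra2 : r ^ α ≤ (2:ℝ)^α := Real.rpow_le_rpow hr hr2 hα.le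
    have : c * (1 + r^α) ≤ (2:ℝ)^(-(α+1)) := by
      calc c * (1 + r^α) ≤ c * (2:ℝ)^(α+1) := by
            apply mul_le_mul_of_nonneg_left _ hc0.le
            rw [h2a1]; linarith
        _ = (2:ℝ)^(-(α+1)) := hkey
    linarith
  · -- case 2 < r
    have hsgn1 : Real.sign (r - 1) = 1 := Real.sign_of_pos (by linarith)
    have habs1 : |r - 1| = r - 1 := abs_of_nonneg (by linarith)
    have hsgn2 : Real.sign (2 - r) = -1 := Real.sign_of_neg (by linarith)
    have habs2 : |r - 2| = r - 2 := abs_of_nonneg (by linarith)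
    rw [hsgn1, habs1, hsgn2, habs2, one_mul]
    have hψ : (r-1)^α ≤ (r-1)^(α+1) - (r-2)^(α+1) := by
      have e1 : (r-1)^(α+1) = (r-1)^α * (r-1) := by
        rw [Real.rpow_add' (by linarith) (by positivity), Real.rpow_one]
      have e2 : (r-2)^(α+1) = (r-2)^α * (r-2) := by
        rw [Real.rpow_add' (by linarith) (by positivity), Real.rpow_one]
      have h3 : (r-2)^α ≤ (r-1)^α := Real.rpow_le_rpow (by linarith) (by linarith) hα.le
      have h5 : (0:ℝ) ≤ r - 2 := by linarith
      nlinarith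
    have h1 : (1:ℝ) ≤ (r-1)^α := Real.one_le_rpow (by linarith) hα.le
    have h2 : r ^ α ≤ (2:ℝ)^α * (r-1)^α := by
      rw [← Real.mul_rpow (by norm_num) (by linarith)]
      exact Real.rpow_le_rpow hr (by linarith) hα.le
    have hc1 : c * (1 + (2:ℝ)^α) ≤ 1 := by
      have hle : (2:ℝ)^(-(α+1)) ≤ 1 := by
        rw [← Real.rpow_zero 2]
        exact Real.rpow_le_rpow_of_exponent_le one_le_two (by linarith)
      nlinarith [hkey, h2a1, hone2, hc0.le]
    have hfin : c * (1 + r^α) ≤ (r-1)^α := by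
      have step : 1 + r^α ≤ (1 + (2:ℝ)^α) * (r-1)^α := by nlinarith
      calc c * (1 + r^α) ≤ c * ((1 + (2:ℝ)^α) * (r-1)^α) :=
            mul_le_mul_of_nonneg_left step hc0.le
        _ = (c * (1 + (2:ℝ)^α)) * (r-1)^α := by ring
        _ ≤ 1 * (r-1)^α := mul_le_mul_of_nonneg_right hc1 (by positivity)
        _ = (r-1)^α := one_mul _
    linarith
end

section
/- For b > 1, the weight ρ_b(x) = exp(−|x|^b) on ℝ^d is not admissible: sup_{x ∈ ℝ^d} (G(1/2,·) * ρ_b)(x)/ρ_b(x) = ∞. Concretely, along x_r = (r,0,…,0), the quantity ∫_{ℝ^d} π^{−d/2} e^{−|x_r − y|² + |x_r|^b − |y|^b} dy tends to infinity as r → ∞. -/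
open Real MeasureTheory Filter Metric

lemma gauss_int (d : ℕ) : Integrable (fun v : EuclideanSpace ℝ (Fin d) => rexp (-‖v‖ ^ 2)) := by
  have h := (GaussianFourier.integrable_cexp_neg_mul_sq_norm_add (V := EuclideanSpace ℝ (Fin d))
    (b := 1) (by norm_num) 0 0).norm
  simp only [Complex.norm_exp] at h
  convert h using 3 with v
  simp [← Complex.ofReal_pow]

lemma integrand_integrable (d : ℕ) (x : EuclideanSpace ℝ (Fin d)) (b : ℝ) (hb : 0 ≤ b) :
    Integrable (fun y : EuclideanSpace ℝ (Fin d) =>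
      Real.pi ^ (-(d:ℝ)/2) * rexp (-‖x - y‖ ^ 2 + ‖x‖ ^ b - ‖y‖ ^ b)) := by
  apply Integrable.const_mul
  have hg : Integrable (fun y : EuclideanSpace ℝ (Fin d) =>
      rexp (‖x‖ ^ b) * rexp (-‖x - y‖ ^ 2)) :=
    ((gauss_int d).comp_sub_left x).const_mul _
  refine hg.mono ?_ ?_
  · apply Continuous.aestronglyMeasurable
    apply Real.continuous_exp.comp
    have h1 : Continuous fun y : EuclideanSpace ℝ (Fin d) => ‖x - y‖ ^ 2 := by fun_prop
    have h2 : Continuous fun y : EuclideanSpace ℝ (Fin d) => ‖y‖ ^ b :=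
      continuous_norm.rpow_const (fun y => Or.inr hb)
    exact ((h1.neg.add continuous_const).sub h2)
  · refine ae_of_all _ fun y => ?_
    rw [Real.norm_of_nonneg (Real.exp_pos _).le, Real.norm_of_nonneg
      (by positivity), ← Real.exp_add]
    apply Real.exp_le_exp.2
    have : 0 ≤ ‖y‖ ^ b := Real.rpow_nonneg (norm_nonneg _) b
    linarith

lemma exponent_key {b r : ℝ} (hb : 1 < b) (hr : 1 ≤ r) {u v : ℝ}
    (hu : u ≤ 3/2) (hu0 : 0 ≤ u) (hv : 0 ≤ v) (hvr : v ≤ r - 1/2) :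
    -(9/4 : ℝ) + (1/2) * r ^ (b - 1) ≤ -u ^ 2 + r ^ b - v ^ b := by
  have hu2 : u ^ 2 ≤ 9/4 := by nlinarith
  have hb0 : (0:ℝ) ≤ b := by linarith
  have hvb : v ^ b ≤ (r - 1/2) ^ b := Real.rpow_le_rpow hv hvr hb0
  have hr0 : (0:ℝ) < r := by linarith
  have hrh : (0:ℝ) < r - 1/2 := by linarith
  have h1 : (r - 1/2) ^ b = (r - 1/2) ^ (b - 1) * (r - 1/2) := by
    rw [← Real.rpow_add_one hrh.ne' (b-1)]; ring_nf
  have h2 : (r - 1/2) ^ (b - 1) ≤ r ^ (b - 1) :=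
    Real.rpow_le_rpow hrh.le (by linarith) (by linarith)
  have h3 : (r - 1/2) ^ b ≤ r ^ (b - 1) * (r - 1/2) := by
    rw [h1]; exact mul_le_mul_of_nonneg_right h2 hrh.le
  have h4 : r ^ (b - 1) * r = r ^ b := by
    rw [← Real.rpow_add_one hr0.ne' (b-1)]; ring_nf
  nlinarith [Real.rpow_nonneg hr0.le (b-1)]

lemma norm_smul_single (d : ℕ) (hd : 0 < d) (r : ℝ) (hr : 0 ≤ r) :
    ‖r • EuclideanSpace.single (⟨0, hd⟩ : Fin d) (1:ℝ)‖ = r := by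
  rw [norm_smul, EuclideanSpace.norm_single]
  simp [abs_of_nonneg hr]

lemma lower_bound (d : ℕ) (hd : 0 < d) (b : ℝ) (hb : 1 < b) (r : ℝ) (hr : 1 ≤ r) :
    (Real.pi ^ (-(d:ℝ)/2) * (volume (ball (0:EuclideanSpace ℝ (Fin d)) (1/2))).toReal)
      * rexp (-(9/4) + (1/2) * r ^ (b-1))
    ≤ ∫ y : EuclideanSpace ℝ (Fin d),
        Real.pi ^ (-(d:ℝ)/2) *
          Real.exp (-‖r • EuclideanSpace.single (⟨0, hd⟩ : Fin d) (1:ℝ) - y‖ ^ 2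
            + ‖r • EuclideanSpace.single (⟨0, hd⟩ : Fin d) (1:ℝ)‖ ^ b - ‖y‖ ^ b) := by
  set e₁ : EuclideanSpace ℝ (Fin d) := EuclideanSpace.single (⟨0, hd⟩ : Fin d) (1:ℝ) with he₁
  set x : EuclideanSpace ℝ (Fin d) := r • e₁ with hx
  set z : EuclideanSpace ℝ (Fin d) := (r - 1) • e₁ with hz
  have hxn : ‖x‖ = r := norm_smul_single d hd r (by linarith)
  have hzn : ‖z‖ = r - 1 := norm_smul_single d hd (r-1) (by linarith)
  have hxz : ‖x - z‖ = 1 := by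
    have h : x - z = (1:ℝ) • e₁ := by rw [hx, hz]; module
    rw [h, one_smul, he₁, EuclideanSpace.norm_single, norm_one]
  set S := ball z (1/2 : ℝ) with hS
  have hInt := integrand_integrable d x b (by linarith)
  have hnn : ∀ y : EuclideanSpace ℝ (Fin d),
      0 ≤ Real.pi ^ (-(d:ℝ)/2) * rexp (-‖x - y‖ ^ 2 + ‖x‖ ^ b - ‖y‖ ^ b) := fun y => by
    positivity
  have h1 : (∫ y in S, Real.pi ^ (-(d:ℝ)/2) * rexp (-‖x - y‖ ^ 2 + ‖x‖ ^ b - ‖y‖ ^ b))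
      ≤ ∫ y, Real.pi ^ (-(d:ℝ)/2) * rexp (-‖x - y‖ ^ 2 + ‖x‖ ^ b - ‖y‖ ^ b) :=
    setIntegral_le_integral hInt (ae_of_all _ hnn)
  have hbnd : ∀ y ∈ S, (Real.pi ^ (-(d:ℝ)/2)) * rexp (-(9/4) + (1/2) * r ^ (b-1))
      ≤ Real.pi ^ (-(d:ℝ)/2) * rexp (-‖x - y‖ ^ 2 + ‖x‖ ^ b - ‖y‖ ^ b) := by
    intro y hy
    have hyz : ‖y - z‖ < 1/2 := by
      rw [hS, mem_ball, dist_eq_norm] at hy; exact hy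
    have hu : ‖x - y‖ ≤ 3/2 := by
      calc ‖x - y‖ = ‖(x - z) + (z - y)‖ := by congr 1; abel
        _ ≤ ‖x - z‖ + ‖z - y‖ := norm_add_le _ _
        _ ≤ 1 + 1/2 := by rw [hxz, norm_sub_rev]; linarith
        _ = 3/2 := by norm_num
    have hvr : ‖y‖ ≤ r - 1/2 := by
      calc ‖y‖ = ‖z + (y - z)‖ := by congr 1; abel
        _ ≤ ‖z‖ + ‖y - z‖ := norm_add_le _ _
        _ ≤ (r-1) + 1/2 := by rw [hzn]; linarith
        _ = r - 1/2 := by ring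
    have key := exponent_key hb hr hu (norm_nonneg _) (norm_nonneg _) hvr
    rw [hxn]
    exact mul_le_mul_of_nonneg_left (Real.exp_le_exp.2 key)
      (Real.rpow_nonneg Real.pi_pos.le _)
  have h2 := setIntegral_ge_of_const_le (μ := volume) measurableSet_ball
    measure_ball_lt_top.ne hbnd hInt.integrableOn
  have hvol : volume S = volume (ball (0:EuclideanSpace ℝ (Fin d)) (1/2)) :=
    Measure.addHaar_ball_center volume z _
  calc (Real.pi ^ (-(d:ℝ)/2) * (volume (ball (0:EuclideanSpace ℝ (Fin d)) (1/2))).toReal)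
      * rexp (-(9/4) + (1/2) * r ^ (b-1))
      = (Real.pi ^ (-(d:ℝ)/2)) * rexp (-(9/4) + (1/2) * r ^ (b-1)) * (volume S).toReal := by
        rw [hvol]; ring
    _ ≤ ∫ y in S, Real.pi ^ (-(d:ℝ)/2) * rexp (-‖x - y‖ ^ 2 + ‖x‖ ^ b - ‖y‖ ^ b) := by
        rw [smul_eq_mul, mul_comm] at h2; exact h2
    _ ≤ _ := h1

lemma heat_pointwise (d : ℕ) (b : ℝ) (x y : EuclideanSpace ℝ (Fin d)) :
    heatKernel d (1/2) (x - y) * rexp (-‖y‖ ^ b)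
      = rexp (-‖x‖ ^ b) * (Real.pi ^ (-(d:ℝ)/2) * rexp (-‖x - y‖ ^ 2 + ‖x‖ ^ b - ‖y‖ ^ b)) := by
  unfold heatKernel
  rw [show (2:ℝ) * Real.pi * (1/2) = Real.pi by ring,
    show -‖x - y‖ ^ 2 / (2 * (1/2 : ℝ)) = -‖x - y‖ ^ 2 by ring]
  rw [mul_assoc, ← Real.exp_add, mul_comm (rexp (-‖x‖ ^ b)), mul_assoc, ← Real.exp_add]
  ring_nf

theorem rho_b_not_admissible (d : ℕ) (hd : 0 < d) (b : ℝ) (hb : 1 < b) :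
    (∀ C : ℝ, ∃ x : EuclideanSpace ℝ (Fin d),
        C * Real.exp (-‖x‖ ^ b) < ∫ y, heatKernel d (1/2) (x - y) * Real.exp (-‖y‖ ^ b))
    ∧ Tendsto
        (fun r : ℝ => ∫ y : EuclideanSpace ℝ (Fin d),
          Real.pi ^ (-(d:ℝ)/2) *
            Real.exp (-‖r • EuclideanSpace.single (⟨0, hd⟩ : Fin d) (1:ℝ) - y‖ ^ 2
              + ‖r • EuclideanSpace.single (⟨0, hd⟩ : Fin d) (1:ℝ)‖ ^ b - ‖y‖ ^ b))
        atTop atTop := by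
  set C0 : ℝ := Real.pi ^ (-(d:ℝ)/2) * (volume (ball (0:EuclideanSpace ℝ (Fin d)) (1/2))).toReal
    with hC0
  have hC0pos : 0 < C0 := by
    apply mul_pos (Real.rpow_pos_of_pos Real.pi_pos _)
    exact ENNReal.toReal_pos (measure_ball_pos volume _ (by norm_num)).ne'
      measure_ball_lt_top.ne
  have hGtend : Tendsto (fun r : ℝ => C0 * rexp (-(9/4) + (1/2) * r ^ (b-1))) atTop atTop := by
    apply Tendsto.const_mul_atTop hC0pos
    apply Real.tendsto_exp_atTop.comp
    apply tendsto_atTop_add_const_left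
    exact (tendsto_rpow_atTop (by linarith)).const_mul_atTop (by norm_num)
  have hT : Tendsto
      (fun r : ℝ => ∫ y : EuclideanSpace ℝ (Fin d),
          Real.pi ^ (-(d:ℝ)/2) *
            Real.exp (-‖r • EuclideanSpace.single (⟨0, hd⟩ : Fin d) (1:ℝ) - y‖ ^ 2
              + ‖r • EuclideanSpace.single (⟨0, hd⟩ : Fin d) (1:ℝ)‖ ^ b - ‖y‖ ^ b))
      atTop atTop := by
    apply tendsto_atTop_mono' atTop ?_ hGtend
    filter_upwards [eventually_ge_atTop (1:ℝ)] with r hr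
    exact lower_bound d hd b hb r hr
  refine ⟨fun C => ?_, hT⟩
  obtain ⟨r, hr⟩ := (hT.eventually_gt_atTop C).exists
  refine ⟨r • EuclideanSpace.single (⟨0, hd⟩ : Fin d) (1:ℝ), ?_⟩
  set x : EuclideanSpace ℝ (Fin d) := r • EuclideanSpace.single (⟨0, hd⟩ : Fin d) (1:ℝ)
  have : (∫ y, heatKernel d (1/2) (x - y) * Real.exp (-‖y‖ ^ b))
      = rexp (-‖x‖ ^ b) * ∫ y, Real.pi ^ (-(d:ℝ)/2)
          * rexp (-‖x - y‖ ^ 2 + ‖x‖ ^ b - ‖y‖ ^ b) := by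
    simp_rw [heat_pointwise d b x]
    exact MeasureTheory.integral_const_mul _ _
  rw [this, mul_comm C]
  exact mul_lt_mul_of_pos_left hr (Real.exp_pos _)
end

section
/- Let b ∈ (1,2] and set K(r) = ∫_0^r exp(−y² + r^b − (r−y)^b) dy. Then for all sufficiently large r, K'(r) ≥ C r^{b−2} exp(b(r−1)^{b−1}) for some constant C > 0; consequently K(r) → ∞ as r → ∞. -/
open Real Filter intervalIntegral Set Metric MeasureTheory

/-- MVT for rpow. -/
lemma mvt_rpow (p : ℝ) (hp : 0 < p) {s t : ℝ} (hs : 0 ≤ s) (hst : s < t) :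
    ∃ c ∈ Set.Ioo s t, t ^ p - s ^ p = (t - s) * (p * c ^ (p - 1)) := by
  have hcont : ContinuousOn (fun x : ℝ => x ^ p) (Set.Icc s t) :=
    (continuous_id.rpow_const (fun x => Or.inr hp.le)).continuousOn
  have hderiv : ∀ c ∈ Set.Ioo s t, HasDerivAt (fun x : ℝ => x ^ p) (p * c ^ (p - 1)) c := by
    intro c hc
    exact Real.hasDerivAt_rpow_const (Or.inl (ne_of_gt (lt_of_le_of_lt hs hc.1)))
  obtain ⟨c, hc, hceq⟩ := exists_hasDerivAt_eq_slope (fun x : ℝ => x ^ p)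
    (fun c => p * c ^ (p - 1)) hst hcont hderiv
  refine ⟨c, hc, ?_⟩
  have hts : t - s ≠ 0 := sub_ne_zero.mpr hst.ne'
  field_simp at hceq
  linarith [hceq]

lemma key1 {b : ℝ} (hb1 : 1 < b) (hb2 : b ≤ 2) {r y : ℝ} (hy0 : 0 < y) (hyr : y ≤ r) :
    (b - 1) * (y * r ^ (b - 2)) ≤ r ^ (b - 1) - (r - y) ^ (b - 1) := by
  obtain ⟨c, hc, hceq⟩ := mvt_rpow (b - 1) (by linarith) (s := r - y) (t := r)
    (by linarith) (by linarith)
  have hc0 : 0 < c := lt_of_le_of_lt (by linarith) hc.1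
  have hrc : c ^ (b - 1 - 1) ≥ r ^ (b - 1 - 1) :=
    Real.rpow_le_rpow_of_nonpos hc0 hc.2.le (by linarith)
  have hr2 : (0:ℝ) ≤ r ^ (b - 1 - 1) := Real.rpow_nonneg (by linarith) _
  have : r ^ (b - 1) - (r - y) ^ (b - 1) = y * ((b - 1) * c ^ (b - 1 - 1)) := by
    rw [hceq]; ring
  rw [this]
  have h1 : (b - 1) * r ^ (b - 1 - 1) ≤ (b - 1) * c ^ (b - 1 - 1) :=
    mul_le_mul_of_nonneg_left hrc (by linarith)
  have hb21 : b - 1 - 1 = b - 2 := by ring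
  rw [hb21] at h1 ⊢
  nlinarith [h1, hy0.le]

lemma key2 {b : ℝ} (hb1 : 1 < b) {r : ℝ} (hr : 2 ≤ r) :
    b * (r - 1) ^ (b - 1) ≤ r ^ b - (r - 1) ^ b := by
  obtain ⟨c, hc, hceq⟩ := mvt_rpow b (by linarith) (s := r - 1) (t := r)
    (by linarith) (by linarith)
  have hrc : (r - 1) ^ (b - 1) ≤ c ^ (b - 1) :=
    Real.rpow_le_rpow (by linarith) hc.1.le (by linarith)
  rw [hceq]
  have : r - (r - 1) = 1 := by ring
  rw [this, one_mul]
  exact mul_le_mul_of_nonneg_left hrc (by linarith)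

lemma f_hasDerivAt {b : ℝ} (hb1 : 1 ≤ b) (y x : ℝ) :
    HasDerivAt (fun x : ℝ => Real.exp (-y^2 + x^b - (x - y)^b))
      (Real.exp (-y^2 + x^b - (x - y)^b) * (b * x^(b-1) - b * (x - y)^(b-1))) x := by
  have h1 : HasDerivAt (fun x : ℝ => x ^ b) (b * x ^ (b-1)) x :=
    Real.hasDerivAt_rpow_const (Or.inr hb1)
  have h2 : HasDerivAt (fun x : ℝ => x - y) 1 x := (hasDerivAt_id x).sub_const y
  have h3 : HasDerivAt (fun x : ℝ => (x - y) ^ b) (b * (x - y) ^ (b-1) * 1) x :=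
    by have := (Real.hasDerivAt_rpow_const (x := x - y) (Or.inr hb1)).comp x h2; exact this
  have h4 : HasDerivAt (fun x : ℝ => -y^2 + x^b - (x - y)^b)
      (b * x^(b-1) - b * (x - y)^(b-1)) x := by
    have := (h1.const_add (-y^2)).sub h3
    simp only [mul_one] at this
    exact this
  exact h4.exp

lemma f_cont {b : ℝ} (hb : 0 ≤ b) (x : ℝ) :
    Continuous (fun y : ℝ => Real.exp (-y^2 + x^b - (x - y)^b)) := by
  apply Real.continuous_exp.comp
  exact ((continuous_pow 2).neg.add continuous_const).sub
    ((continuous_const.sub continuous_id).rpow_const (fun y => Or.inr hb))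

lemma f'_cont {b : ℝ} (hb : 0 ≤ b) (hb1 : 1 ≤ b) (x : ℝ) :
    Continuous (fun y : ℝ => Real.exp (-y^2 + x^b - (x - y)^b)
      * (b * x^(b-1) - b * (x - y)^(b-1))) := by
  have hc1 : Continuous (fun y : ℝ => -y^2 + x^b - (x - y)^b) := by
    exact ((continuous_pow 2).neg.add continuous_const).sub
      ((continuous_const.sub continuous_id).rpow_const (fun y => Or.inr hb))
  refine (Real.continuous_exp.comp hc1).mul ?_
  refine continuous_const.sub ?_
  exact continuous_const.mul
    ((continuous_const.sub continuous_id).rpow_const (fun y => Or.inr (by linarith)))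

lemma f'_bound {b r : ℝ} (hb1 : 1 < b) (hr : 2 ≤ r) {x y : ℝ}
    (hx : x ∈ Metric.closedBall r 1) (hy : y ∈ Set.Icc (0:ℝ) (r+1)) :
    |Real.exp (-y^2 + x^b - (x - y)^b) * (b * x^(b-1) - b * (x - y)^(b-1))|
      ≤ Real.exp (2*(r+1)^b) * (2*b*(r+1)^(b-1)) := by
  rw [Metric.mem_closedBall, Real.dist_eq, abs_le] at hx
  obtain ⟨hy0, hy1⟩ := hy
  have hx0 : (0:ℝ) ≤ x := by linarith
  have hx1 : x ≤ r + 1 := by linarith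
  have hxy : |x - y| ≤ r + 1 := by rw [abs_le]; constructor <;> linarith
  have e1 : x ^ b ≤ (r+1) ^ b := Real.rpow_le_rpow hx0 hx1 (by linarith)
  have e2 : -((x - y) ^ b) ≤ (r+1) ^ b := by
    calc -((x - y) ^ b) ≤ |(x - y) ^ b| := neg_le_abs _
      _ ≤ |x - y| ^ b := Real.abs_rpow_le_abs_rpow _ _
      _ ≤ (r+1) ^ b := Real.rpow_le_rpow (abs_nonneg _) hxy (by linarith)
  have earg : -y^2 + x^b - (x - y)^b ≤ 2*(r+1)^b := by nlinarith [sq_nonneg y]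
  have eexp : Real.exp (-y^2 + x^b - (x - y)^b) ≤ Real.exp (2*(r+1)^b) :=
    Real.exp_le_exp.mpr earg
  have habsx : |x| ≤ r + 1 := by rw [abs_le]; constructor <;> linarith
  have e3 : |x ^ (b-1)| ≤ (r+1) ^ (b-1) :=
    (Real.abs_rpow_le_abs_rpow _ _).trans
      (Real.rpow_le_rpow (abs_nonneg _) habsx (by linarith))
  have e4 : |(x - y) ^ (b-1)| ≤ (r+1) ^ (b-1) :=
    (Real.abs_rpow_le_abs_rpow _ _).trans
      (Real.rpow_le_rpow (abs_nonneg _) hxy (by linarith))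
  have e5 : |b * x^(b-1) - b * (x - y)^(b-1)| ≤ 2*b*(r+1)^(b-1) := by
    calc |b * x^(b-1) - b * (x - y)^(b-1)| ≤ |b * x^(b-1)| + |b * (x - y)^(b-1)| :=
          abs_sub _ _
      _ = b * |x^(b-1)| + b * |(x - y)^(b-1)| := by
          rw [abs_mul, abs_mul, abs_of_nonneg (by linarith : (0:ℝ) ≤ b)]
      _ ≤ b * ((r+1)^(b-1)) + b * ((r+1)^(b-1)) := by
          have hb0 : (0:ℝ) ≤ b := by linarith
          gcongr
      _ = 2*b*(r+1)^(b-1) := by ring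
  rw [abs_mul, Real.abs_exp]
  exact mul_le_mul eexp e5 (abs_nonneg _) (Real.exp_pos _).le

lemma K_hasDerivAt {b : ℝ} (hb1 : 1 < b) (hb2 : b ≤ 2) {r : ℝ} (hr : 2 ≤ r) :
    HasDerivAt (fun x : ℝ => ∫ y in (0:ℝ)..x, Real.exp (-y^2 + x^b - (x - y)^b))
      ((∫ y in (0:ℝ)..r, Real.exp (-y^2 + r^b - (r - y)^b) * (b * r^(b-1) - b * (r - y)^(b-1)))
        + Real.exp (-r^2 + r^b - (r - r)^b)) r := by
  have hb0 : (0:ℝ) ≤ b := by linarith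
  set f : ℝ → ℝ → ℝ := fun x y => Real.exp (-y^2 + x^b - (x - y)^b) with hf
  set f' : ℝ → ℝ → ℝ := fun x y =>
    Real.exp (-y^2 + x^b - (x - y)^b) * (b * x^(b-1) - b * (x - y)^(b-1)) with hf'
  set M : ℝ := Real.exp (2*(r+1)^b) * (2*b*(r+1)^(b-1)) with hM
  have hMpos : 0 < M := by positivity
  -- Step A : derivative of the parameter integral with fixed endpoints
  have hA : HasDerivAt (fun x => ∫ y in (0:ℝ)..r, f x y) (∫ y in (0:ℝ)..r, f' r y) r := by
    have := (intervalIntegral.hasDerivAt_integral_of_dominated_loc_of_deriv_le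
      (F := f) (F' := f') (x₀ := r) (a := 0) (b := r) (bound := fun _ => M)
      (μ := MeasureTheory.volume) (Metric.ball_mem_nhds r one_pos)
      (Eventually.of_forall fun x => ((f_cont hb0 x).aestronglyMeasurable))
      ((f_cont hb0 r).intervalIntegrable 0 r)
      ((f'_cont hb0 hb1.le r).aestronglyMeasurable)
      (Eventually.of_forall ?_) intervalIntegrable_const
      (Eventually.of_forall fun t _ x _ => f_hasDerivAt hb1.le t x)).2
    · exact this
    · intro t ht x hx
      rw [Set.uIoc_of_le (by linarith : (0:ℝ) ≤ r)] at ht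
      have hxc : x ∈ Metric.closedBall r 1 := Metric.ball_subset_closedBall hx
      have hyc : t ∈ Set.Icc (0:ℝ) (r+1) := ⟨ht.1.le, by linarith [ht.2]⟩
      simpa [hf', Real.norm_eq_abs] using f'_bound hb1 hr hxc hyc
  -- Step B : moving endpoint with frozen parameter
  have hcr : Continuous (f r) := f_cont hb0 r
  have hB : HasDerivAt (fun x => ∫ y in r..x, f r y) (f r r) r :=
    intervalIntegral.integral_hasDerivAt_right (hcr.intervalIntegrable r r)
      (hcr.stronglyMeasurable.stronglyMeasurableAtFilter) hcr.continuousAt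
  -- Step C : the error term has derivative 0
  set E : ℝ → ℝ := fun x => ∫ y in r..x, (f x y - f r y) with hE_def
  have hE : HasDerivAt E 0 r := by
    rw [hasDerivAt_iff_isLittleO]
    have hE0 : E r = 0 := intervalIntegral.integral_same
    simp only [hE0, sub_zero, smul_zero]
    rw [Asymptotics.isLittleO_iff]
    intro c hc
    filter_upwards [Metric.ball_mem_nhds r (lt_min one_pos (div_pos hc hMpos))] with x hx
    rw [Metric.mem_ball, Real.dist_eq, lt_min_iff] at hx
    obtain ⟨hx1, hx2⟩ := hx
    have hxc : x ∈ Metric.closedBall r 1 := by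
      rw [Metric.mem_closedBall, Real.dist_eq]; exact hx1.le
    have hkey : ∀ y ∈ Set.uIoc r x, ‖f x y - f r y‖ ≤ M * |x - r| := by
      intro y hy
      have hyc : y ∈ Set.Icc (0:ℝ) (r+1) := by
        rw [Set.mem_uIoc] at hy
        rw [abs_lt] at hx1
        rcases hy with ⟨h1, h2⟩ | ⟨h1, h2⟩ <;> constructor <;> linarith
      have := Convex.norm_image_sub_le_of_norm_hasDerivWithin_le
        (f := fun z => f z y) (f' := fun z => f' z y) (s := Metric.closedBall r 1)
        (fun z _ => (f_hasDerivAt hb1.le y z).hasDerivWithinAt)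
        (fun z hz => by simpa [hf', Real.norm_eq_abs] using f'_bound hb1 hr hz hyc)
        (convex_closedBall r 1) (Metric.mem_closedBall_self one_pos.le) hxc
      simpa [Real.norm_eq_abs] using this
    have hbound : ‖E x‖ ≤ (M * |x - r|) * |x - r| := by
      have := intervalIntegral.norm_integral_le_of_norm_le_const hkey
      calc ‖E x‖ ≤ M * |x - r| * |x - r| := this
        _ = (M * |x - r|) * |x - r| := by ring
    have hMle : M * |x - r| ≤ c := by
      rw [lt_div_iff₀ hMpos] at hx2
      nlinarith [abs_nonneg (x - r)]
    calc ‖E x‖ ≤ (M * |x - r|) * |x - r| := hbound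
      _ ≤ c * |x - r| := by nlinarith [abs_nonneg (x - r)]
      _ = c * ‖x - r‖ := by rw [Real.norm_eq_abs]
  -- Combine
  have heq : (fun x : ℝ => ∫ y in (0:ℝ)..x, Real.exp (-y^2 + x^b - (x - y)^b))
      = fun x => (∫ y in (0:ℝ)..r, f x y) + ((∫ y in r..x, f r y) + E x) := by
    funext x
    have h1 : (∫ y in r..x, f r y) + E x = ∫ y in r..x, f x y := by
      rw [show E x = ∫ y in r..x, (f x y - f r y) from rfl, ← intervalIntegral.integral_add (g := fun y => f x y - f r y) (hcr.intervalIntegrable r x)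
        ((((f_cont hb0 x).sub hcr).intervalIntegrable r x : IntervalIntegrable (fun y => f x y - f r y) MeasureTheory.volume r x))]
      apply intervalIntegral.integral_congr
      intro y _
      ring
    rw [h1, intervalIntegral.integral_add_adjacent_intervals
      ((f_cont hb0 x).intervalIntegrable 0 r) ((f_cont hb0 x).intervalIntegrable r x)]
  rw [heq]
  simpa [hf, hf', sub_self, Pi.add_def] using hA.add (hB.add hE)

theorem K_deriv_lower_bound (b : ℝ) (hb : b ∈ Set.Ioc (1:ℝ) 2) :
    (∃ C R : ℝ, 0 < C ∧ ∀ r : ℝ, R ≤ r →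
        C * r ^ (b - 2) * Real.exp (b * (r - 1) ^ (b - 1))
          ≤ deriv (fun r : ℝ => ∫ y in (0:ℝ)..r, Real.exp (-y^2 + r^b - (r - y)^b)) r)
    ∧ Tendsto (fun r : ℝ => ∫ y in (0:ℝ)..r, Real.exp (-y^2 + r^b - (r - y)^b))
        atTop atTop := by
  obtain ⟨hb1, hb2⟩ := hb
  have hb0 : (0:ℝ) ≤ b := by linarith
  constructor
  · refine ⟨b * (b-1) * Real.exp (-4), 2,
      mul_pos (mul_pos (by linarith) (by linarith)) (Real.exp_pos _), ?_⟩
    intro r hr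
    rw [(K_hasDerivAt hb1 hb2 hr).deriv]
    have hend : (0:ℝ) ≤ Real.exp (-r^2 + r^b - (r - r)^b) := (Real.exp_pos _).le
    have hr0 : (0:ℝ) ≤ r := by linarith
    have hrp : (0:ℝ) ≤ r ^ (b-2) := Real.rpow_nonneg hr0 _
    have hi : ∀ a c : ℝ, IntervalIntegrable (fun y => Real.exp (-y^2 + r^b - (r - y)^b)
        * (b * r^(b-1) - b * (r - y)^(b-1))) MeasureTheory.volume a c :=
      fun a c => (f'_cont hb0 hb1.le r).intervalIntegrable a c
    have hnn : ∀ y ∈ Set.Icc (0:ℝ) r, 0 ≤ Real.exp (-y^2 + r^b - (r - y)^b)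
        * (b * r^(b-1) - b * (r - y)^(b-1)) := by
      intro y hy
      have h1 : (r - y) ^ (b-1) ≤ r ^ (b-1) :=
        Real.rpow_le_rpow (by linarith [hy.2]) (by linarith [hy.1]) (by linarith)
      have : 0 ≤ b * r^(b-1) - b * (r - y)^(b-1) := by nlinarith
      positivity
    have hsplit : (∫ y in (0:ℝ)..r, Real.exp (-y^2 + r^b - (r - y)^b)
          * (b * r^(b-1) - b * (r - y)^(b-1)))
        = ((∫ y in (0:ℝ)..1, Real.exp (-y^2 + r^b - (r - y)^b)
            * (b * r^(b-1) - b * (r - y)^(b-1)))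
          + ∫ y in (1:ℝ)..2, Real.exp (-y^2 + r^b - (r - y)^b)
            * (b * r^(b-1) - b * (r - y)^(b-1)))
          + ∫ y in (2:ℝ)..r, Real.exp (-y^2 + r^b - (r - y)^b)
            * (b * r^(b-1) - b * (r - y)^(b-1)) := by
      rw [intervalIntegral.integral_add_adjacent_intervals (hi 0 1) (hi 1 2),
        intervalIntegral.integral_add_adjacent_intervals (hi 0 2) (hi 2 r)]
    have h01 : 0 ≤ ∫ y in (0:ℝ)..1, Real.exp (-y^2 + r^b - (r - y)^b)
        * (b * r^(b-1) - b * (r - y)^(b-1)) :=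
      intervalIntegral.integral_nonneg (by norm_num)
        (fun u hu => hnn u ⟨hu.1, by linarith [hu.2]⟩)
    have h2r : 0 ≤ ∫ y in (2:ℝ)..r, Real.exp (-y^2 + r^b - (r - y)^b)
        * (b * r^(b-1) - b * (r - y)^(b-1)) :=
      intervalIntegral.integral_nonneg hr
        (fun u hu => hnn u ⟨by linarith [hu.1], hu.2⟩)
    have h12 : b * (b-1) * Real.exp (-4) * r ^ (b-2) * Real.exp (b * (r-1) ^ (b-1))
        ≤ ∫ y in (1:ℝ)..2, Real.exp (-y^2 + r^b - (r - y)^b)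
          * (b * r^(b-1) - b * (r - y)^(b-1)) := by
      have hpt : ∀ y ∈ Set.Icc (1:ℝ) 2,
          b * (b-1) * Real.exp (-4) * r ^ (b-2) * Real.exp (b * (r-1) ^ (b-1))
            ≤ Real.exp (-y^2 + r^b - (r - y)^b) * (b * r^(b-1) - b * (r - y)^(b-1)) := by
        intro y hy
        obtain ⟨hy1, hy2⟩ := hy
        have k1 := key1 hb1 hb2 (show (0:ℝ) < y by linarith) (by linarith : y ≤ r)
        have k2 := key2 hb1 hr
        have e6 : (r - y) ^ b ≤ (r - 1) ^ b :=
          Real.rpow_le_rpow (by linarith) (by linarith) hb0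
        have earg : -4 + b * (r-1)^(b-1) ≤ -y^2 + r^b - (r - y)^b := by nlinarith
        have eexp : Real.exp (-4 + b * (r-1)^(b-1))
            ≤ Real.exp (-y^2 + r^b - (r - y)^b) := Real.exp_le_exp.mpr earg
        have efac : b * (b-1) * r^(b-2) ≤ b * r^(b-1) - b * (r - y)^(b-1) := by
          calc b * (b-1) * r^(b-2) = b * ((b-1) * (1 * r^(b-2))) := by ring
            _ ≤ b * ((b-1) * (y * r^(b-2))) := by
                apply mul_le_mul_of_nonneg_left _ hb0
                apply mul_le_mul_of_nonneg_left _ (by linarith : (0:ℝ) ≤ b - 1)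
                exact mul_le_mul_of_nonneg_right hy1 hrp
            _ ≤ b * (r^(b-1) - (r - y)^(b-1)) := mul_le_mul_of_nonneg_left k1 hb0
            _ = b * r^(b-1) - b * (r - y)^(b-1) := by ring
        calc b * (b-1) * Real.exp (-4) * r ^ (b-2) * Real.exp (b * (r-1) ^ (b-1))
            = Real.exp (-4 + b * (r-1)^(b-1)) * (b * (b-1) * r^(b-2)) := by
              rw [Real.exp_add]; ring
          _ ≤ Real.exp (-y^2 + r^b - (r - y)^b) * (b * r^(b-1) - b * (r - y)^(b-1)) :=
              mul_le_mul eexp efac (mul_nonneg (mul_nonneg hb0 (by linarith)) hrp) (Real.exp_pos _).le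
      have := intervalIntegral.integral_mono_on (μ := MeasureTheory.volume)
        (a := 1) (b := 2) (by norm_num) intervalIntegrable_const (hi 1 2) hpt
      simp only [intervalIntegral.integral_const, smul_eq_mul] at this
      norm_num at this
      linarith [this]
    linarith
  · -- tendsto
    have lower : ∀ r : ℝ, 2 ≤ r →
        Real.exp (-4) * Real.exp (b * (r-1) ^ (b-1))
          ≤ ∫ y in (0:ℝ)..r, Real.exp (-y^2 + r^b - (r - y)^b) := by
      intro r hr
      have hi : ∀ a c : ℝ, IntervalIntegrable
          (fun y => Real.exp (-y^2 + r^b - (r - y)^b)) MeasureTheory.volume a c :=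
        fun a c => (f_cont hb0 r).intervalIntegrable a c
      have hsplit : (∫ y in (0:ℝ)..r, Real.exp (-y^2 + r^b - (r - y)^b))
          = ((∫ y in (0:ℝ)..1, Real.exp (-y^2 + r^b - (r - y)^b))
            + ∫ y in (1:ℝ)..2, Real.exp (-y^2 + r^b - (r - y)^b))
            + ∫ y in (2:ℝ)..r, Real.exp (-y^2 + r^b - (r - y)^b) := by
        rw [intervalIntegral.integral_add_adjacent_intervals (hi 0 1) (hi 1 2),
          intervalIntegral.integral_add_adjacent_intervals (hi 0 2) (hi 2 r)]
      have h01 : 0 ≤ ∫ y in (0:ℝ)..1, Real.exp (-y^2 + r^b - (r - y)^b) :=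
        intervalIntegral.integral_nonneg (by norm_num) (fun u _ => (Real.exp_pos _).le)
      have h2r : 0 ≤ ∫ y in (2:ℝ)..r, Real.exp (-y^2 + r^b - (r - y)^b) :=
        intervalIntegral.integral_nonneg hr (fun u _ => (Real.exp_pos _).le)
      have h12 : Real.exp (-4) * Real.exp (b * (r-1) ^ (b-1))
          ≤ ∫ y in (1:ℝ)..2, Real.exp (-y^2 + r^b - (r - y)^b) := by
        have hpt : ∀ y ∈ Set.Icc (1:ℝ) 2,
            Real.exp (-4) * Real.exp (b * (r-1) ^ (b-1))
              ≤ Real.exp (-y^2 + r^b - (r - y)^b) := by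
          intro y hy
          obtain ⟨hy1, hy2⟩ := hy
          have k2 := key2 hb1 hr
          have e6 : (r - y) ^ b ≤ (r - 1) ^ b :=
            Real.rpow_le_rpow (by linarith) (by linarith) hb0
          have earg : -4 + b * (r-1)^(b-1) ≤ -y^2 + r^b - (r - y)^b := by nlinarith
          calc Real.exp (-4) * Real.exp (b * (r-1) ^ (b-1))
              = Real.exp (-4 + b * (r-1)^(b-1)) := (Real.exp_add _ _).symm
            _ ≤ Real.exp (-y^2 + r^b - (r - y)^b) := Real.exp_le_exp.mpr earg
        have := intervalIntegral.integral_mono_on (μ := MeasureTheory.volume)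
          (a := 1) (b := 2) (by norm_num) intervalIntegrable_const (hi 1 2) hpt
        simp only [intervalIntegral.integral_const, smul_eq_mul] at this
        norm_num at this
        linarith [this]
      linarith
    have htend : Tendsto (fun r : ℝ => Real.exp (-4) * Real.exp (b * (r-1) ^ (b-1)))
        atTop atTop := by
      have h1 : Tendsto (fun r : ℝ => r - 1) atTop atTop :=
        tendsto_atTop_add_const_right _ _ tendsto_id
      have h2 : Tendsto (fun r : ℝ => (r-1) ^ (b-1)) atTop atTop :=
        (tendsto_rpow_atTop (by linarith : 0 < b - 1)).comp h1
      have h3 : Tendsto (fun r : ℝ => b * (r-1) ^ (b-1)) atTop atTop :=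
        h2.const_mul_atTop (by linarith : (0:ℝ) < b)
      exact (Real.tendsto_exp_atTop.comp h3).const_mul_atTop (Real.exp_pos _)
    exact tendsto_atTop_mono' atTop ((eventually_ge_atTop 2).mono lower) htend
end
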